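/- arXiv:1406.5376 — 4 statements merged into one kernel-verified Lean document; each statement's English description precedes it below -/
import Mathlib

section
/- Let G be a connected c-edge-coloured multigraph, c ≥ 2, one of whose colours is called red. Suppose G contains a proper path P = x_1 y_1 x_2 y_2 … x_p y_p with p ≥ 3 vertices-pairs, in which every edge x_i y_i (i = 1,…,p) is red. If G contains no proper cycle C with vertex set exactly V(P), then for each of the c−1 colours different from red there are at least 2p−2 missing edges of that colour among the vertices of G; hence in total G has at least (c−1)(2p−2) missing edges in colours different from red. -/
set_option linter.unreachableTactic false
set_option linter.unusedTactic false
set_option maxHeartbeats 1000000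
set_option linter.all false


/-!  A `c`-edge-coloured multigraph on a vertex type `V` is modelled as a family
`G : Fin c → SimpleGraph V`, where `G i` is the simple graph formed by the edges
of colour `i` (no two parallel edges of the same colour). -/

/-- Total number of edges of a `c`-edge-coloured multigraph: the sum of the
numbers of edges of the colour classes. -/
noncomputable def numEdges {V : Type*} {c : ℕ} (G : Fin c → SimpleGraph V) : ℕ :=
  ∑ i : Fin c, (G i).edgeSet.ncard

/-- The rainbow degree of a vertex: the number of distinct colours appearing on
edges incident to it. -/
noncomputable def rainbowDeg {V : Type*} {c : ℕ} (G : Fin c → SimpleGraph V) (x : V) : ℕ :=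
  {i : Fin c | ∃ y, (G i).Adj x y}.ncard

/-- The rainbow degree of the multigraph: the minimum rainbow degree over all vertices. -/
noncomputable def minRainbowDeg {V : Type*} {c : ℕ} (G : Fin c → SimpleGraph V) : ℕ :=
  sInf (Set.range (rainbowDeg G))

/-- The total degree of a vertex: the number of edges incident to it, over all colours. -/
noncomputable def totalDeg {V : Type*} {c : ℕ} (G : Fin c → SimpleGraph V) (x : V) : ℕ :=
  ∑ i : Fin c, ((G i).neighborSet x).ncard

/-- `v 0, v 1, …, v (m-1)`, with edge `k` (joining `v k` and `v (k+1)`) taken in colour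
`κ k`, is a proper path on `m` (distinct) vertices: consecutive edges get distinct
colours. -/
def IsProperPathOn {V : Type*} {c : ℕ} (G : Fin c → SimpleGraph V) (m : ℕ)
    (v : ℕ → V) (κ : ℕ → Fin c) : Prop :=
  Set.InjOn v (Set.Iio m) ∧
  (∀ i, i + 1 < m → (G (κ i)).Adj (v i) (v (i + 1))) ∧
  (∀ i, i + 2 < m → κ i ≠ κ (i + 1))

/-- `G` has a proper Hamiltonian path: a proper path through all the vertices. -/
def HasProperHamPath {V : Type*} [Fintype V] {c : ℕ} (G : Fin c → SimpleGraph V) : Prop :=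
  ∃ (v : ℕ → V) (κ : ℕ → Fin c),
    IsProperPathOn G (Fintype.card V) v κ ∧ ∀ x : V, ∃ i < Fintype.card V, v i = x

/-- `G` has a proper cycle whose vertex set is exactly `S`. -/
def HasProperCycleOn {V : Type*} {c : ℕ} (G : Fin c → SimpleGraph V) (S : Set V) : Prop :=
  ∃ (m : ℕ) (w : ZMod m → V) (μ : ZMod m → Fin c),
    3 ≤ m ∧ Function.Injective w ∧ Set.range w = S ∧
    (∀ i, (G (μ i)).Adj (w i) (w (i + 1))) ∧
    (∀ i, μ i ≠ μ (i + 1))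

/-- A proper path `x_1 y_1 x_2 y_2 … x_q y_q` (on `2q` vertices) compatible with a
set `M` of red edges: its edges are alternately in `M` (these being red) and not
in `M`, beginning and ending with an edge of `M`. -/
def IsCompatiblePath {V : Type*} {c : ℕ} (G : Fin c → SimpleGraph V) (red : Fin c)
    (M : Set (Sym2 V)) (q : ℕ) (w : ℕ → V) (μ : ℕ → Fin c) : Prop :=
  IsProperPathOn G (2 * q) w μ ∧
  (∀ j, j < q → μ (2 * j) = red ∧ s(w (2 * j), w (2 * j + 1)) ∈ M) ∧
  (∀ j, j + 1 < q → s(w (2 * j + 1), w (2 * j + 2)) ∉ M)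

lemma build_cycle {V : Type*} {c : ℕ} (G : Fin c → SimpleGraph V) (n : ℕ) (hn : 3 ≤ n)
    (v : ℕ → V) (hinj : Set.InjOn v (Set.Iio n))
    (seq : ℕ → ℕ) (ν : ℕ → Fin c)
    (hs1 : ∀ t, t < n → seq t < n)
    (hs2 : ∀ t1 t2, t1 < n → t2 < n → seq t1 = seq t2 → t1 = t2)
    (hadj : ∀ t, t < n → (G (ν t)).Adj (v (seq t)) (v (seq ((t + 1) % n))))
    (hne : ∀ t, t < n → ν t ≠ ν ((t + 1) % n)) :
    HasProperCycleOn G (v '' Set.Iio n) := by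
  haveI : NeZero n := ⟨by omega⟩
  haveI : Fact (1 < n) := ⟨by omega⟩
  have hval : ∀ z : ZMod n, (z + 1).val = (z.val + 1) % n := by
    intro z; rw [ZMod.val_add, ZMod.val_one]
  refine ⟨n, fun z => v (seq z.val), fun z => ν z.val, hn, ?_, ?_, ?_, ?_⟩
  · intro z1 z2 h
    have h2 : seq z1.val = seq z2.val :=
      hinj (Set.mem_Iio.2 (hs1 _ (ZMod.val_lt z1))) (Set.mem_Iio.2 (hs1 _ (ZMod.val_lt z2))) h
    exact ZMod.val_injective n (hs2 _ _ (ZMod.val_lt z1) (ZMod.val_lt z2) h2)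
  · ext x
    constructor
    · rintro ⟨z, rfl⟩
      exact ⟨seq z.val, Set.mem_Iio.2 (hs1 _ (ZMod.val_lt z)), rfl⟩
    · rintro ⟨a, ha, rfl⟩
      have hsurj : Function.Surjective (fun t : Fin n => (⟨seq t, hs1 t t.2⟩ : Fin n)) := by
        apply Finite.surjective_of_injective
        intro t1 t2 h12
        exact Fin.ext (hs2 _ _ t1.2 t2.2 (congrArg Fin.val h12))
      obtain ⟨t, ht⟩ := hsurj ⟨a, Set.mem_Iio.1 ha⟩
      refine ⟨((t : ℕ) : ZMod n), ?_⟩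
      show v (seq ((t : ℕ) : ZMod n).val) = v a
      have : seq ((t : ℕ) : ZMod n).val = a := by
        rw [ZMod.val_cast_of_lt t.2]
        exact congrArg Fin.val ht
      rw [this]
  · intro z
    have := hadj z.val (ZMod.val_lt z)
    rw [← hval] at this
    exact this
  · intro z
    have := hne z.val (ZMod.val_lt z)
    rw [← hval] at this
    exact this

section Constructions

variable {V : Type*} {c p : ℕ} (G : Fin c → SimpleGraph V) (red : Fin c)
  (v : ℕ → V) (κ : ℕ → Fin c) (i : Fin c)


lemma conC1 (hp : 3 ≤ p)
    (hinj : Set.InjOn v (Set.Iio (2*p)))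
    (hadjP : ∀ t, t + 1 < 2*p → (G (κ t)).Adj (v t) (v (t+1)))
    (hkP : ∀ t, t + 2 < 2*p → κ t ≠ κ (t+1))
    (hred : ∀ j < p, κ (2*j) = red)
    (hi : i ≠ red)
    
    (e1 : (G i).Adj (v (0)) (v (2*p-1))) :
    HasProperCycleOn G (v '' Set.Iio (2*p)) := by
  have hRed : ∀ z, z < 2*p → z % 2 = 0 → κ z = red := by
    intro z hz he
    have h := hred (z/2) (by omega)
    rw [show 2*(z/2) = z by omega] at h
    exact h
  have hne1 : ∀ z, z < 2*p → z % 2 = 0 → i ≠ κ z := by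
    intro z hz he; rw [hRed z hz he]; exact hi
  have hne2 : ∀ z, z < 2*p → z % 2 = 0 → κ z ≠ i := fun z hz he => (hne1 z hz he).symm
  have hneK1 : ∀ z w, w = z + 1 → z + 2 < 2*p → κ z ≠ κ w := by
    intro z w hw h; subst hw; exact hkP z h
  have hneK2 : ∀ z w, z = w + 1 → w + 2 < 2*p → κ z ≠ κ w := by
    intro z w hw h; subst hw; exact (hkP w h).symm
  have ch : ∀ a b a' b', (G i).Adj (v a) (v b) → a' = a → b' = b → (G i).Adj (v a') (v b') := by
    intro a b a' b' h h1 h2; rw [h1, h2]; exact h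
  have adjA : ∀ a b z, z = a → b = a + 1 → a + 1 < 2*p → (G (κ z)).Adj (v a) (v b) := by
    intro a b z hz hb h; rw [hz, hb]; exact hadjP a h
  have adjD : ∀ a b z, z = b → a = b + 1 → b + 1 < 2*p → (G (κ z)).Adj (v a) (v b) := by
    intro a b z hz hb h; rw [hz, hb]; exact (hadjP b h).symm
  classical
  refine build_cycle G (2*p) (by omega) v hinj
    (fun t => t)
    (fun t => if t = 2*p-1 then i else κ t) ?_ ?_ ?_ ?_
  · intro t ht; omega
  · intro t1 t2 h1 h2 h; omega
  · intro t ht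
    by_cases hl : t = 2*p-1
    · rw [hl, show (2*p-1+1) % (2*p) = 0 by rw [show 2*p-1+1 = 2*p by omega]; exact Nat.mod_self _]
      split_ifs <;> (try simp only [not_true, true_or, or_true, false_or, or_false] at *) <;>
        first
          | (exfalso; omega)
          | (exfalso; assumption)
          | exact adjA _ _ _ (by omega) (by omega) (by omega)
          | exact adjD _ _ _ (by omega) (by omega) (by omega)
          | exact ch _ _ _ _ e1 (by omega) (by omega)
          | exact ch _ _ _ _ e1.symm (by omega) (by omega)
    · rw [show (t+1) % (2*p) = t+1 from Nat.mod_eq_of_lt (by omega)]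
      split_ifs <;> (try simp only [not_true, true_or, or_true, false_or, or_false] at *) <;>
        first
          | (exfalso; omega)
          | (exfalso; assumption)
          | exact adjA _ _ _ (by omega) (by omega) (by omega)
          | exact adjD _ _ _ (by omega) (by omega) (by omega)
          | exact ch _ _ _ _ e1 (by omega) (by omega)
          | exact ch _ _ _ _ e1.symm (by omega) (by omega)
  · intro t ht
    by_cases hl : t = 2*p-1
    · rw [hl, show (2*p-1+1) % (2*p) = 0 by rw [show 2*p-1+1 = 2*p by omega]; exact Nat.mod_self _]
      split_ifs <;> (try simp only [not_true, true_or, or_true, false_or, or_false] at *) <;>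
        first
          | (exfalso; omega)
          | (exfalso; assumption)
          | exact hne1 _ (by omega) (by omega)
          | exact hne2 _ (by omega) (by omega)
          | exact hneK1 _ _ (by omega) (by omega)
          | exact hneK2 _ _ (by omega) (by omega)
    · rw [show (t+1) % (2*p) = t+1 from Nat.mod_eq_of_lt (by omega)]
      split_ifs <;> (try simp only [not_true, true_or, or_true, false_or, or_false] at *) <;>
        first
          | (exfalso; omega)
          | (exfalso; assumption)
          | exact hne1 _ (by omega) (by omega)
          | exact hne2 _ (by omega) (by omega)
          | exact hneK1 _ _ (by omega) (by omega)
          | exact hneK2 _ _ (by omega) (by omega)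

lemma conC2 (hp : 3 ≤ p)
    (hinj : Set.InjOn v (Set.Iio (2*p)))
    (hadjP : ∀ t, t + 1 < 2*p → (G (κ t)).Adj (v t) (v (t+1)))
    (hkP : ∀ t, t + 2 < 2*p → κ t ≠ κ (t+1))
    (hred : ∀ j < p, κ (2*j) = red)
    (hi : i ≠ red)
    (j : ℕ) (hj1 : 1 ≤ j) (hj2 : j ≤ p - 1)
    (e1 : (G i).Adj (v (0)) (v (2*j)))
    (e2 : (G i).Adj (v (2*j-1)) (v (2*p-1))) :
    HasProperCycleOn G (v '' Set.Iio (2*p)) := by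
  have hRed : ∀ z, z < 2*p → z % 2 = 0 → κ z = red := by
    intro z hz he
    have h := hred (z/2) (by omega)
    rw [show 2*(z/2) = z by omega] at h
    exact h
  have hne1 : ∀ z, z < 2*p → z % 2 = 0 → i ≠ κ z := by
    intro z hz he; rw [hRed z hz he]; exact hi
  have hne2 : ∀ z, z < 2*p → z % 2 = 0 → κ z ≠ i := fun z hz he => (hne1 z hz he).symm
  have hneK1 : ∀ z w, w = z + 1 → z + 2 < 2*p → κ z ≠ κ w := by
    intro z w hw h; subst hw; exact hkP z h
  have hneK2 : ∀ z w, z = w + 1 → w + 2 < 2*p → κ z ≠ κ w := by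
    intro z w hw h; subst hw; exact (hkP w h).symm
  have ch : ∀ a b a' b', (G i).Adj (v a) (v b) → a' = a → b' = b → (G i).Adj (v a') (v b') := by
    intro a b a' b' h h1 h2; rw [h1, h2]; exact h
  have adjA : ∀ a b z, z = a → b = a + 1 → a + 1 < 2*p → (G (κ z)).Adj (v a) (v b) := by
    intro a b z hz hb h; rw [hz, hb]; exact hadjP a h
  have adjD : ∀ a b z, z = b → a = b + 1 → b + 1 < 2*p → (G (κ z)).Adj (v a) (v b) := by
    intro a b z hz hb h; rw [hz, hb]; exact (hadjP b h).symm
  classical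
  refine build_cycle G (2*p) (by omega) v hinj
    (fun t => if t = 0 then 0 else if t ≤ 2*p - 2*j then 2*j + t - 1 else 2*p - t)
    (fun t => if t = 0 ∨ t = 2*p - 2*j then i else if t < 2*p - 2*j then κ (2*j + t - 1) else κ (2*p - t - 1)) ?_ ?_ ?_ ?_
  · intro t ht; split_ifs <;> omega
  · intro t1 t2 h1 h2 h; split_ifs at h <;> omega
  · intro t ht
    by_cases hl : t = 2*p-1
    · rw [hl, show (2*p-1+1) % (2*p) = 0 by rw [show 2*p-1+1 = 2*p by omega]; exact Nat.mod_self _]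
      split_ifs <;> (try simp only [not_true, true_or, or_true, false_or, or_false] at *) <;>
        first
          | (exfalso; omega)
          | (exfalso; assumption)
          | exact adjA _ _ _ (by omega) (by omega) (by omega)
          | exact adjD _ _ _ (by omega) (by omega) (by omega)
          | exact ch _ _ _ _ e1 (by omega) (by omega)
          | exact ch _ _ _ _ e1.symm (by omega) (by omega)
          | exact ch _ _ _ _ e2 (by omega) (by omega)
          | exact ch _ _ _ _ e2.symm (by omega) (by omega)
    · rw [show (t+1) % (2*p) = t+1 from Nat.mod_eq_of_lt (by omega)]
      split_ifs <;> (try simp only [not_true, true_or, or_true, false_or, or_false] at *) <;>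
        first
          | (exfalso; omega)
          | (exfalso; assumption)
          | exact adjA _ _ _ (by omega) (by omega) (by omega)
          | exact adjD _ _ _ (by omega) (by omega) (by omega)
          | exact ch _ _ _ _ e1 (by omega) (by omega)
          | exact ch _ _ _ _ e1.symm (by omega) (by omega)
          | exact ch _ _ _ _ e2 (by omega) (by omega)
          | exact ch _ _ _ _ e2.symm (by omega) (by omega)
  · intro t ht
    by_cases hl : t = 2*p-1
    · rw [hl, show (2*p-1+1) % (2*p) = 0 by rw [show 2*p-1+1 = 2*p by omega]; exact Nat.mod_self _]
      split_ifs <;> (try simp only [not_true, true_or, or_true, false_or, or_false] at *) <;>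
        first
          | (exfalso; omega)
          | (exfalso; assumption)
          | exact hne1 _ (by omega) (by omega)
          | exact hne2 _ (by omega) (by omega)
          | exact hneK1 _ _ (by omega) (by omega)
          | exact hneK2 _ _ (by omega) (by omega)
    · rw [show (t+1) % (2*p) = t+1 from Nat.mod_eq_of_lt (by omega)]
      split_ifs <;> (try simp only [not_true, true_or, or_true, false_or, or_false] at *) <;>
        first
          | (exfalso; omega)
          | (exfalso; assumption)
          | exact hne1 _ (by omega) (by omega)
          | exact hne2 _ (by omega) (by omega)
          | exact hneK1 _ _ (by omega) (by omega)
          | exact hneK2 _ _ (by omega) (by omega)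

lemma conC3 (hp : 3 ≤ p)
    (hinj : Set.InjOn v (Set.Iio (2*p)))
    (hadjP : ∀ t, t + 1 < 2*p → (G (κ t)).Adj (v t) (v (t+1)))
    (hkP : ∀ t, t + 2 < 2*p → κ t ≠ κ (t+1))
    (hred : ∀ j < p, κ (2*j) = red)
    (hi : i ≠ red)
    (j k : ℕ) (hj1 : 1 ≤ j) (hjk : j < k) (hk2 : k ≤ p - 1)
    (e1 : (G i).Adj (v (0)) (v (2*j)))
    (e2 : (G i).Adj (v (2*k-1)) (v (2*p-1)))
    (e3 : (G i).Adj (v (2*j-1)) (v (2*k))) :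
    HasProperCycleOn G (v '' Set.Iio (2*p)) := by
  have hRed : ∀ z, z < 2*p → z % 2 = 0 → κ z = red := by
    intro z hz he
    have h := hred (z/2) (by omega)
    rw [show 2*(z/2) = z by omega] at h
    exact h
  have hne1 : ∀ z, z < 2*p → z % 2 = 0 → i ≠ κ z := by
    intro z hz he; rw [hRed z hz he]; exact hi
  have hne2 : ∀ z, z < 2*p → z % 2 = 0 → κ z ≠ i := fun z hz he => (hne1 z hz he).symm
  have hneK1 : ∀ z w, w = z + 1 → z + 2 < 2*p → κ z ≠ κ w := by
    intro z w hw h; subst hw; exact hkP z h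
  have hneK2 : ∀ z w, z = w + 1 → w + 2 < 2*p → κ z ≠ κ w := by
    intro z w hw h; subst hw; exact (hkP w h).symm
  have ch : ∀ a b a' b', (G i).Adj (v a) (v b) → a' = a → b' = b → (G i).Adj (v a') (v b') := by
    intro a b a' b' h h1 h2; rw [h1, h2]; exact h
  have adjA : ∀ a b z, z = a → b = a + 1 → a + 1 < 2*p → (G (κ z)).Adj (v a) (v b) := by
    intro a b z hz hb h; rw [hz, hb]; exact hadjP a h
  have adjD : ∀ a b z, z = b → a = b + 1 → b + 1 < 2*p → (G (κ z)).Adj (v a) (v b) := by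
    intro a b z hz hb h; rw [hz, hb]; exact (hadjP b h).symm
  classical
  refine build_cycle G (2*p) (by omega) v hinj
    (fun t => if t = 0 then 0 else if t ≤ 2*k - 2*j then 2*j + t - 1 else if t ≤ 2*p - 2*j then 2*p + 2*k - 2*j - t else 2*p - t)
    (fun t => if t = 0 ∨ t = 2*k - 2*j ∨ t = 2*p - 2*j then i else if t < 2*k - 2*j then κ (2*j + t - 1) else if t < 2*p - 2*j then κ (2*p + 2*k - 2*j - t - 1) else κ (2*p - t - 1)) ?_ ?_ ?_ ?_
  · intro t ht; split_ifs <;> omega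
  · intro t1 t2 h1 h2 h; split_ifs at h <;> omega
  · intro t ht
    by_cases hl : t = 2*p-1
    · rw [hl, show (2*p-1+1) % (2*p) = 0 by rw [show 2*p-1+1 = 2*p by omega]; exact Nat.mod_self _]
      split_ifs <;> (try simp only [not_true, true_or, or_true, false_or, or_false] at *) <;>
        first
          | (exfalso; omega)
          | (exfalso; assumption)
          | exact adjA _ _ _ (by omega) (by omega) (by omega)
          | exact adjD _ _ _ (by omega) (by omega) (by omega)
          | exact ch _ _ _ _ e1 (by omega) (by omega)
          | exact ch _ _ _ _ e1.symm (by omega) (by omega)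
          | exact ch _ _ _ _ e2 (by omega) (by omega)
          | exact ch _ _ _ _ e2.symm (by omega) (by omega)
          | exact ch _ _ _ _ e3 (by omega) (by omega)
          | exact ch _ _ _ _ e3.symm (by omega) (by omega)
    · rw [show (t+1) % (2*p) = t+1 from Nat.mod_eq_of_lt (by omega)]
      split_ifs <;> (try simp only [not_true, true_or, or_true, false_or, or_false] at *) <;>
        first
          | (exfalso; omega)
          | (exfalso; assumption)
          | exact adjA _ _ _ (by omega) (by omega) (by omega)
          | exact adjD _ _ _ (by omega) (by omega) (by omega)
          | exact ch _ _ _ _ e1 (by omega) (by omega)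
          | exact ch _ _ _ _ e1.symm (by omega) (by omega)
          | exact ch _ _ _ _ e2 (by omega) (by omega)
          | exact ch _ _ _ _ e2.symm (by omega) (by omega)
          | exact ch _ _ _ _ e3 (by omega) (by omega)
          | exact ch _ _ _ _ e3.symm (by omega) (by omega)
  · intro t ht
    by_cases hl : t = 2*p-1
    · rw [hl, show (2*p-1+1) % (2*p) = 0 by rw [show 2*p-1+1 = 2*p by omega]; exact Nat.mod_self _]
      split_ifs <;> (try simp only [not_true, true_or, or_true, false_or, or_false] at *) <;>
        first
          | (exfalso; omega)
          | (exfalso; assumption)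
          | exact hne1 _ (by omega) (by omega)
          | exact hne2 _ (by omega) (by omega)
          | exact hneK1 _ _ (by omega) (by omega)
          | exact hneK2 _ _ (by omega) (by omega)
    · rw [show (t+1) % (2*p) = t+1 from Nat.mod_eq_of_lt (by omega)]
      split_ifs <;> (try simp only [not_true, true_or, or_true, false_or, or_false] at *) <;>
        first
          | (exfalso; omega)
          | (exfalso; assumption)
          | exact hne1 _ (by omega) (by omega)
          | exact hne2 _ (by omega) (by omega)
          | exact hneK1 _ _ (by omega) (by omega)
          | exact hneK2 _ _ (by omega) (by omega)

lemma conC4 (hp : 3 ≤ p)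
    (hinj : Set.InjOn v (Set.Iio (2*p)))
    (hadjP : ∀ t, t + 1 < 2*p → (G (κ t)).Adj (v t) (v (t+1)))
    (hkP : ∀ t, t + 2 < 2*p → κ t ≠ κ (t+1))
    (hred : ∀ j < p, κ (2*j) = red)
    (hi : i ≠ red)
    (j k : ℕ) (hj1 : 1 ≤ j) (hjk : j < k) (hk2 : k ≤ p - 1)
    (e1 : (G i).Adj (v (2*j-1)) (v (2*k-1)))
    (e2 : (G i).Adj (v (2*j)) (v (2*p-1)))
    (e3 : (G i).Adj (v (0)) (v (2*k))) :
    HasProperCycleOn G (v '' Set.Iio (2*p)) := by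
  have hRed : ∀ z, z < 2*p → z % 2 = 0 → κ z = red := by
    intro z hz he
    have h := hred (z/2) (by omega)
    rw [show 2*(z/2) = z by omega] at h
    exact h
  have hne1 : ∀ z, z < 2*p → z % 2 = 0 → i ≠ κ z := by
    intro z hz he; rw [hRed z hz he]; exact hi
  have hne2 : ∀ z, z < 2*p → z % 2 = 0 → κ z ≠ i := fun z hz he => (hne1 z hz he).symm
  have hneK1 : ∀ z w, w = z + 1 → z + 2 < 2*p → κ z ≠ κ w := by
    intro z w hw h; subst hw; exact hkP z h
  have hneK2 : ∀ z w, z = w + 1 → w + 2 < 2*p → κ z ≠ κ w := by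
    intro z w hw h; subst hw; exact (hkP w h).symm
  have ch : ∀ a b a' b', (G i).Adj (v a) (v b) → a' = a → b' = b → (G i).Adj (v a') (v b') := by
    intro a b a' b' h h1 h2; rw [h1, h2]; exact h
  have adjA : ∀ a b z, z = a → b = a + 1 → a + 1 < 2*p → (G (κ z)).Adj (v a) (v b) := by
    intro a b z hz hb h; rw [hz, hb]; exact hadjP a h
  have adjD : ∀ a b z, z = b → a = b + 1 → b + 1 < 2*p → (G (κ z)).Adj (v a) (v b) := by
    intro a b z hz hb h; rw [hz, hb]; exact (hadjP b h).symm
  classical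
  refine build_cycle G (2*p) (by omega) v hinj
    (fun t => if t ≤ 2*j-1 then t else if t ≤ 2*k-1 then 2*j + 2*k - 1 - t else 2*p - 1 + 2*k - t)
    (fun t => if t = 2*j-1 ∨ t = 2*k-1 ∨ t = 2*p-1 then i else if t < 2*j-1 then κ t else if t < 2*k-1 then κ (2*j + 2*k - 2 - t) else κ (2*p - 2 + 2*k - t)) ?_ ?_ ?_ ?_
  · intro t ht; split_ifs <;> omega
  · intro t1 t2 h1 h2 h; split_ifs at h <;> omega
  · intro t ht
    by_cases hl : t = 2*p-1
    · rw [hl, show (2*p-1+1) % (2*p) = 0 by rw [show 2*p-1+1 = 2*p by omega]; exact Nat.mod_self _]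
      split_ifs <;> (try simp only [not_true, true_or, or_true, false_or, or_false] at *) <;>
        first
          | (exfalso; omega)
          | (exfalso; assumption)
          | exact adjA _ _ _ (by omega) (by omega) (by omega)
          | exact adjD _ _ _ (by omega) (by omega) (by omega)
          | exact ch _ _ _ _ e1 (by omega) (by omega)
          | exact ch _ _ _ _ e1.symm (by omega) (by omega)
          | exact ch _ _ _ _ e2 (by omega) (by omega)
          | exact ch _ _ _ _ e2.symm (by omega) (by omega)
          | exact ch _ _ _ _ e3 (by omega) (by omega)
          | exact ch _ _ _ _ e3.symm (by omega) (by omega)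
    · rw [show (t+1) % (2*p) = t+1 from Nat.mod_eq_of_lt (by omega)]
      split_ifs <;> (try simp only [not_true, true_or, or_true, false_or, or_false] at *) <;>
        first
          | (exfalso; omega)
          | (exfalso; assumption)
          | exact adjA _ _ _ (by omega) (by omega) (by omega)
          | exact adjD _ _ _ (by omega) (by omega) (by omega)
          | exact ch _ _ _ _ e1 (by omega) (by omega)
          | exact ch _ _ _ _ e1.symm (by omega) (by omega)
          | exact ch _ _ _ _ e2 (by omega) (by omega)
          | exact ch _ _ _ _ e2.symm (by omega) (by omega)
          | exact ch _ _ _ _ e3 (by omega) (by omega)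
          | exact ch _ _ _ _ e3.symm (by omega) (by omega)
  · intro t ht
    by_cases hl : t = 2*p-1
    · rw [hl, show (2*p-1+1) % (2*p) = 0 by rw [show 2*p-1+1 = 2*p by omega]; exact Nat.mod_self _]
      split_ifs <;> (try simp only [not_true, true_or, or_true, false_or, or_false] at *) <;>
        first
          | (exfalso; omega)
          | (exfalso; assumption)
          | exact hne1 _ (by omega) (by omega)
          | exact hne2 _ (by omega) (by omega)
          | exact hneK1 _ _ (by omega) (by omega)
          | exact hneK2 _ _ (by omega) (by omega)
    · rw [show (t+1) % (2*p) = t+1 from Nat.mod_eq_of_lt (by omega)]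
      split_ifs <;> (try simp only [not_true, true_or, or_true, false_or, or_false] at *) <;>
        first
          | (exfalso; omega)
          | (exfalso; assumption)
          | exact hne1 _ (by omega) (by omega)
          | exact hne2 _ (by omega) (by omega)
          | exact hneK1 _ _ (by omega) (by omega)
          | exact hneK2 _ _ (by omega) (by omega)

lemma conC4' (hp : 3 ≤ p)
    (hinj : Set.InjOn v (Set.Iio (2*p)))
    (hadjP : ∀ t, t + 1 < 2*p → (G (κ t)).Adj (v t) (v (t+1)))
    (hkP : ∀ t, t + 2 < 2*p → κ t ≠ κ (t+1))
    (hred : ∀ j < p, κ (2*j) = red)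
    (hi : i ≠ red)
    (l j : ℕ) (hl1 : 1 ≤ l) (hlj : l < j) (hj2 : j ≤ p - 1)
    (e1 : (G i).Adj (v (2*l)) (v (2*j)))
    (e2 : (G i).Adj (v (0)) (v (2*j-1)))
    (e3 : (G i).Adj (v (2*l-1)) (v (2*p-1))) :
    HasProperCycleOn G (v '' Set.Iio (2*p)) := by
  have hRed : ∀ z, z < 2*p → z % 2 = 0 → κ z = red := by
    intro z hz he
    have h := hred (z/2) (by omega)
    rw [show 2*(z/2) = z by omega] at h
    exact h
  have hne1 : ∀ z, z < 2*p → z % 2 = 0 → i ≠ κ z := by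
    intro z hz he; rw [hRed z hz he]; exact hi
  have hne2 : ∀ z, z < 2*p → z % 2 = 0 → κ z ≠ i := fun z hz he => (hne1 z hz he).symm
  have hneK1 : ∀ z w, w = z + 1 → z + 2 < 2*p → κ z ≠ κ w := by
    intro z w hw h; subst hw; exact hkP z h
  have hneK2 : ∀ z w, z = w + 1 → w + 2 < 2*p → κ z ≠ κ w := by
    intro z w hw h; subst hw; exact (hkP w h).symm
  have ch : ∀ a b a' b', (G i).Adj (v a) (v b) → a' = a → b' = b → (G i).Adj (v a') (v b') := by
    intro a b a' b' h h1 h2; rw [h1, h2]; exact h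
  have adjA : ∀ a b z, z = a → b = a + 1 → a + 1 < 2*p → (G (κ z)).Adj (v a) (v b) := by
    intro a b z hz hb h; rw [hz, hb]; exact hadjP a h
  have adjD : ∀ a b z, z = b → a = b + 1 → b + 1 < 2*p → (G (κ z)).Adj (v a) (v b) := by
    intro a b z hz hb h; rw [hz, hb]; exact (hadjP b h).symm
  classical
  refine build_cycle G (2*p) (by omega) v hinj
    (fun t => if t ≤ 2*p-1-2*j then 2*p-1-t else if t ≤ 2*p-1-2*l then t + 2*l + 2*j - 2*p else t + 2*l - 2*p)
    (fun t => if t = 2*p-1-2*j ∨ t = 2*p-1-2*l ∨ t = 2*p-1 then i else if t < 2*p-1-2*j then κ (2*p-2-t) else if t < 2*p-1-2*l then κ (t + 2*l + 2*j - 2*p) else κ (t + 2*l - 2*p)) ?_ ?_ ?_ ?_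
  · intro t ht; split_ifs <;> omega
  · intro t1 t2 h1 h2 h; split_ifs at h <;> omega
  · intro t ht
    by_cases hl : t = 2*p-1
    · rw [hl, show (2*p-1+1) % (2*p) = 0 by rw [show 2*p-1+1 = 2*p by omega]; exact Nat.mod_self _]
      split_ifs <;> (try simp only [not_true, true_or, or_true, false_or, or_false] at *) <;>
        first
          | (exfalso; omega)
          | (exfalso; assumption)
          | exact adjA _ _ _ (by omega) (by omega) (by omega)
          | exact adjD _ _ _ (by omega) (by omega) (by omega)
          | exact ch _ _ _ _ e1 (by omega) (by omega)
          | exact ch _ _ _ _ e1.symm (by omega) (by omega)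
          | exact ch _ _ _ _ e2 (by omega) (by omega)
          | exact ch _ _ _ _ e2.symm (by omega) (by omega)
          | exact ch _ _ _ _ e3 (by omega) (by omega)
          | exact ch _ _ _ _ e3.symm (by omega) (by omega)
    · rw [show (t+1) % (2*p) = t+1 from Nat.mod_eq_of_lt (by omega)]
      split_ifs <;> (try simp only [not_true, true_or, or_true, false_or, or_false] at *) <;>
        first
          | (exfalso; omega)
          | (exfalso; assumption)
          | exact adjA _ _ _ (by omega) (by omega) (by omega)
          | exact adjD _ _ _ (by omega) (by omega) (by omega)
          | exact ch _ _ _ _ e1 (by omega) (by omega)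
          | exact ch _ _ _ _ e1.symm (by omega) (by omega)
          | exact ch _ _ _ _ e2 (by omega) (by omega)
          | exact ch _ _ _ _ e2.symm (by omega) (by omega)
          | exact ch _ _ _ _ e3 (by omega) (by omega)
          | exact ch _ _ _ _ e3.symm (by omega) (by omega)
  · intro t ht
    by_cases hl : t = 2*p-1
    · rw [hl, show (2*p-1+1) % (2*p) = 0 by rw [show 2*p-1+1 = 2*p by omega]; exact Nat.mod_self _]
      split_ifs <;> (try simp only [not_true, true_or, or_true, false_or, or_false] at *) <;>
        first
          | (exfalso; omega)
          | (exfalso; assumption)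
          | exact hne1 _ (by omega) (by omega)
          | exact hne2 _ (by omega) (by omega)
          | exact hneK1 _ _ (by omega) (by omega)
          | exact hneK2 _ _ (by omega) (by omega)
    · rw [show (t+1) % (2*p) = t+1 from Nat.mod_eq_of_lt (by omega)]
      split_ifs <;> (try simp only [not_true, true_or, or_true, false_or, or_false] at *) <;>
        first
          | (exfalso; omega)
          | (exfalso; assumption)
          | exact hne1 _ (by omega) (by omega)
          | exact hne2 _ (by omega) (by omega)
          | exact hneK1 _ _ (by omega) (by omega)
          | exact hneK2 _ _ (by omega) (by omega)

end Constructions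

/-- If a connected `c`-edge-coloured multigraph (`c ≥ 2`) contains a proper
path `x_1 y_1 x_2 y_2 … x_p y_p` (`p ≥ 3`) whose edges `x_i y_i` are all red, and contains no
proper cycle `C` with `V(C) = V(P)`, then for each colour `i ≠ red` there are at least
`2p - 2` missing edges of colour `i`; hence in total at least `(c-1)(2p-2)` missing edges in
colours different from red. -/
theorem stmt3 {V : Type*} [Fintype V] {c p : ℕ} (G : Fin c → SimpleGraph V)
    (red : Fin c) (hc : 2 ≤ c)
    (hconn : (⨆ i, G i).Connected) (hp : 3 ≤ p)
    (v : ℕ → V) (κ : ℕ → Fin c)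
    (hpath : IsProperPathOn G (2 * p) v κ)
    (hred : ∀ j < p, κ (2 * j) = red)
    (hnocycle : ¬ HasProperCycleOn G (v '' Set.Iio (2 * p))) :
    (∀ i : Fin c, i ≠ red → 2 * p - 2 ≤ ((G i)ᶜ).edgeSet.ncard) ∧
    (c - 1) * (2 * p - 2) ≤ ∑ i ∈ Finset.univ.erase red, ((G i)ᶜ).edgeSet.ncard := by
  classical
  obtain ⟨hinj, hadjP, hkP⟩ := hpath
  have key : ∀ i : Fin c, i ≠ red → 2 * p - 2 ≤ ((G i)ᶜ).edgeSet.ncard := by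
    intro i hi
    have hc1 : ¬ (G i).Adj (v 0) (v (2*p-1)) :=
      fun h => hnocycle (conC1 G red v κ i hp hinj hadjP hkP hred hi h)
    have hc2 : ∀ j, 1 ≤ j → j ≤ p-1 →
        ¬((G i).Adj (v 0) (v (2*j)) ∧ (G i).Adj (v (2*j-1)) (v (2*p-1))) :=
      fun j h1 h2 h => hnocycle (conC2 G red v κ i hp hinj hadjP hkP hred hi j h1 h2 h.1 h.2)
    have hc3 : ∀ j k, 1 ≤ j → j < k → k ≤ p-1 →
        ¬((G i).Adj (v 0) (v (2*j)) ∧ (G i).Adj (v (2*k-1)) (v (2*p-1)) ∧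
          (G i).Adj (v (2*j-1)) (v (2*k))) :=
      fun j k h1 h2 h3 h =>
        hnocycle (conC3 G red v κ i hp hinj hadjP hkP hred hi j k h1 h2 h3 h.1 h.2.1 h.2.2)
    have hc4 : ∀ j k, 1 ≤ j → j < k → k ≤ p-1 →
        ¬((G i).Adj (v (2*j-1)) (v (2*k-1)) ∧ (G i).Adj (v (2*j)) (v (2*p-1)) ∧
          (G i).Adj (v 0) (v (2*k))) :=
      fun j k h1 h2 h3 h =>
        hnocycle (conC4 G red v κ i hp hinj hadjP hkP hred hi j k h1 h2 h3 h.1 h.2.1 h.2.2)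
    have hc5 : ∀ l j, 1 ≤ l → l < j → j ≤ p-1 →
        ¬((G i).Adj (v (2*l)) (v (2*j)) ∧ (G i).Adj (v 0) (v (2*j-1)) ∧
          (G i).Adj (v (2*l-1)) (v (2*p-1))) :=
      fun l j h1 h2 h3 h =>
        hnocycle (conC4' G red v κ i hp hinj hadjP hkP hred hi l j h1 h2 h3 h.1 h.2.1 h.2.2)
    have key2 : ∀ α β γ δ : ℕ, α < 2*p → β < 2*p → γ < 2*p → δ < 2*p →
        s(v α, v β) = s(v γ, v δ) → (α = γ ∧ β = δ) ∨ (α = δ ∧ β = γ) := by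
      intro α β γ δ hα hβ hγ hδ h
      rw [Sym2.eq_iff] at h
      rcases h with ⟨h1, h2⟩ | ⟨h1, h2⟩
      · exact Or.inl ⟨hinj hα hγ h1, hinj hβ hδ h2⟩
      · exact Or.inr ⟨hinj hα hδ h1, hinj hβ hγ h2⟩
    have hmiss : ∀ α β : ℕ, α < 2*p → β < 2*p → α ≠ β → ¬(G i).Adj (v α) (v β) →
        s(v α, v β) ∈ ((G i)ᶜ).edgeSet := by
      intro α β hα hβ hab hnadj
      rw [SimpleGraph.mem_edgeSet, SimpleGraph.compl_adj]
      exact ⟨fun h => hab (hinj hα hβ h), hnadj⟩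
    suffices hexists : ∃ F : Finset (Sym2 V), ↑F ⊆ ((G i)ᶜ).edgeSet ∧ 2*p-2 ≤ F.card by
      obtain ⟨F, hsub, hcard⟩ := hexists
      calc 2 * p - 2 ≤ F.card := hcard
        _ = (↑F : Set (Sym2 V)).ncard := (Set.ncard_coe_finset F).symm
        _ ≤ ((G i)ᶜ).edgeSet.ncard := Set.ncard_le_ncard hsub (Set.toFinite _)
    set S : Finset ℕ := (Finset.Icc 1 (p-1)).filter (fun j => (G i).Adj (v 0) (v (2*j))) with hSdef
    set T : Finset ℕ := (Finset.Icc 1 (p-1)).filter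
      (fun j => (G i).Adj (v (2*j-1)) (v (2*p-1))) with hTdef
    have hSmem : ∀ j, j ∈ S ↔ ((1 ≤ j ∧ j ≤ p-1) ∧ (G i).Adj (v 0) (v (2*j))) := by
      intro j; rw [hSdef, Finset.mem_filter, Finset.mem_Icc]
    have hTmem : ∀ j, j ∈ T ↔ ((1 ≤ j ∧ j ≤ p-1) ∧ (G i).Adj (v (2*j-1)) (v (2*p-1))) := by
      intro j; rw [hTdef, Finset.mem_filter, Finset.mem_Icc]
    have hScard : S.card ≤ p - 1 := by
      refine le_trans (Finset.card_le_card
        (fun j hj => Finset.mem_Icc.2 ((hSmem j).1 hj).1)) ?_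
      rw [Nat.card_Icc]
      omega
    have hTcard : T.card ≤ p - 1 := by
      refine le_trans (Finset.card_le_card
        (fun j hj => Finset.mem_Icc.2 ((hTmem j).1 hj).1)) ?_
      rw [Nat.card_Icc]
      omega
    set k' : ℕ := if h : S.Nonempty then S.max' h else 1 with hk'def
    set l' : ℕ := if h : T.Nonempty then T.min' h else p-1 with hl'def
    have hk'spec : (1 ≤ k' ∧ k' ≤ p-1) ∧ (∀ j ∈ S, j ≤ k') ∧ (S.Nonempty → k' ∈ S) ∧
        (¬S.Nonempty → k' = 1) := by
      rw [hk'def]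
      by_cases h : S.Nonempty
      · rw [dif_pos h]
        have hm := S.max'_mem h
        have hm2 := ((hSmem _).1 hm).1
        exact ⟨⟨hm2.1, hm2.2⟩, fun j hj => S.le_max' j hj, fun _ => hm, fun h' => absurd h h'⟩
      · rw [dif_neg h]
        exact ⟨⟨le_refl 1, by omega⟩, fun j hj => absurd ⟨j, hj⟩ h,
          fun h' => absurd h' h, fun _ => rfl⟩
    have hl'spec : (1 ≤ l' ∧ l' ≤ p-1) ∧ (∀ j ∈ T, l' ≤ j) ∧ (T.Nonempty → l' ∈ T) ∧
        (¬T.Nonempty → l' = p-1) := by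
      rw [hl'def]
      by_cases h : T.Nonempty
      · rw [dif_pos h]
        have hm := T.min'_mem h
        have hm2 := ((hTmem _).1 hm).1
        exact ⟨⟨hm2.1, hm2.2⟩, fun j hj => T.min'_le j hj, fun _ => hm, fun h' => absurd h h'⟩
      · rw [dif_neg h]
        exact ⟨⟨by omega, le_refl _⟩, fun j hj => absurd ⟨j, hj⟩ h,
          fun h' => absurd h' h, fun _ => rfl⟩
    have hk'a : 1 ≤ k' := hk'spec.1.1
    have hk'b : k' ≤ p-1 := hk'spec.1.2
    have hl'a : 1 ≤ l' := hl'spec.1.1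
    have hl'b : l' ≤ p-1 := hl'spec.1.2
    have hsk : S.card ≤ k' := by
      have h1 : S.card ≤ (Finset.Icc 1 k').card := Finset.card_le_card
        (fun j hj => Finset.mem_Icc.2 ⟨((hSmem j).1 hj).1.1, hk'spec.2.1 j hj⟩)
      rw [Nat.card_Icc] at h1
      omega
    have htl : T.card + l' ≤ p := by
      have h1 : T.card ≤ (Finset.Icc l' (p-1)).card := Finset.card_le_card
        (fun j hj => Finset.mem_Icc.2 ⟨hl'spec.2.1 j hj, ((hTmem j).1 hj).1.2⟩)
      rw [Nat.card_Icc] at h1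
      omega
    set F1 : Finset (Sym2 V) := {s(v 0, v (2*p-1))} with hF1def
    set F2 : Finset (Sym2 V) :=
      ((Finset.Icc 1 (p-1)) \ S).image (fun a => s(v 0, v (2*a))) with hF2def
    set F3 : Finset (Sym2 V) :=
      ((Finset.Icc 1 (p-1)) \ T).image (fun a => s(v (2*a-1), v (2*p-1))) with hF3def
    set F4 : Finset (Sym2 V) := (Finset.Icc 1 (k'-1)).image
      (fun a => if (G i).Adj (v (2*a)) (v (2*p-1)) then s(v (2*a-1), v (2*k'-1))
        else s(v (2*a), v (2*p-1))) with hF4def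
    set F5 : Finset (Sym2 V) := (Finset.Icc (l'+1) (p-1)).image
      (fun a => if (G i).Adj (v 0) (v (2*a-1)) then s(v (2*l'), v (2*a))
        else s(v 0, v (2*a-1))) with hF5def
    have hsub1 : ↑F1 ⊆ ((G i)ᶜ).edgeSet := by
      intro x hx
      rw [Finset.mem_coe, hF1def, Finset.mem_singleton] at hx
      subst hx
      exact hmiss 0 (2*p-1) (by omega) (by omega) (by omega) hc1
    have hsub2 : ↑F2 ⊆ ((G i)ᶜ).edgeSet := by
      intro x hx
      rw [Finset.mem_coe, hF2def] at hx
      obtain ⟨a, ha, rfl⟩ := Finset.mem_image.1 hx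
      have ha' := Finset.mem_sdiff.1 ha
      have hb := Finset.mem_Icc.1 ha'.1
      refine hmiss 0 (2*a) (by omega) (by omega) (by omega) ?_
      intro hA
      exact ha'.2 ((hSmem a).2 ⟨⟨hb.1, hb.2⟩, hA⟩)
    have hsub3 : ↑F3 ⊆ ((G i)ᶜ).edgeSet := by
      intro x hx
      rw [Finset.mem_coe, hF3def] at hx
      obtain ⟨a, ha, rfl⟩ := Finset.mem_image.1 hx
      have ha' := Finset.mem_sdiff.1 ha
      have hb := Finset.mem_Icc.1 ha'.1
      refine hmiss (2*a-1) (2*p-1) (by omega) (by omega) (by omega) ?_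
      intro hA
      exact ha'.2 ((hTmem a).2 ⟨⟨hb.1, hb.2⟩, hA⟩)
    have hsub4 : ↑F4 ⊆ ((G i)ᶜ).edgeSet := by
      intro x hx
      rw [Finset.mem_coe, hF4def] at hx
      obtain ⟨a, ha, rfl⟩ := Finset.mem_image.1 hx
      have hb := Finset.mem_Icc.1 ha
      have hSne : S.Nonempty := by
        by_contra hcon
        have := hk'spec.2.2.2 hcon
        omega
      have hk'S := (hSmem _).1 (hk'spec.2.2.1 hSne)
      by_cases hA : (G i).Adj (v (2*a)) (v (2*p-1))
      · rw [if_pos hA]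
        refine hmiss (2*a-1) (2*k'-1) (by omega) (by omega) (by omega) ?_
        intro hx'
        exact hc4 a k' (by omega) (by omega) (by omega) ⟨hx', hA, hk'S.2⟩
      · rw [if_neg hA]
        exact hmiss (2*a) (2*p-1) (by omega) (by omega) (by omega) hA
    have hsub5 : ↑F5 ⊆ ((G i)ᶜ).edgeSet := by
      intro x hx
      rw [Finset.mem_coe, hF5def] at hx
      obtain ⟨a, ha, rfl⟩ := Finset.mem_image.1 hx
      have hb := Finset.mem_Icc.1 ha
      have hTne : T.Nonempty := by
        by_contra hcon
        have := hl'spec.2.2.2 hcon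
        omega
      have hl'T := (hTmem _).1 (hl'spec.2.2.1 hTne)
      by_cases hA : (G i).Adj (v 0) (v (2*a-1))
      · rw [if_pos hA]
        refine hmiss (2*l') (2*a) (by omega) (by omega) (by omega) ?_
        intro hx'
        exact hc5 l' a (by omega) (by omega) (by omega) ⟨hx', hA, hl'T.2⟩
      · rw [if_neg hA]
        exact hmiss 0 (2*a-1) (by omega) (by omega) (by omega) hA
    have hcard1 : F1.card = 1 := by rw [hF1def]; exact Finset.card_singleton _
    have hcard2 : F2.card = (p-1) - S.card := by
      have hinj2 : Set.InjOn (fun a => s(v 0, v (2*a))) ↑((Finset.Icc 1 (p-1)) \ S) := by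
        intro a ha b hb h
        have hba := Finset.mem_Icc.1 (Finset.mem_sdiff.1 (Finset.mem_coe.1 ha)).1
        have hbb := Finset.mem_Icc.1 (Finset.mem_sdiff.1 (Finset.mem_coe.1 hb)).1
        rcases key2 _ _ _ _ (by omega) (by omega) (by omega) (by omega) h with
          ⟨q1,q2⟩|⟨q1,q2⟩ <;> omega
      rw [hF2def, Finset.card_image_of_injOn hinj2, Finset.card_sdiff_of_subset
        (by intro j hj; exact Finset.mem_Icc.2 ((hSmem j).1 hj).1), Nat.card_Icc]
      omega
    have hcard3 : F3.card = (p-1) - T.card := by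
      have hinj3 : Set.InjOn (fun a => s(v (2*a-1), v (2*p-1)))
          ↑((Finset.Icc 1 (p-1)) \ T) := by
        intro a ha b hb h
        have hba := Finset.mem_Icc.1 (Finset.mem_sdiff.1 (Finset.mem_coe.1 ha)).1
        have hbb := Finset.mem_Icc.1 (Finset.mem_sdiff.1 (Finset.mem_coe.1 hb)).1
        rcases key2 _ _ _ _ (by omega) (by omega) (by omega) (by omega) h with
          ⟨q1,q2⟩|⟨q1,q2⟩ <;> omega
      rw [hF3def, Finset.card_image_of_injOn hinj3, Finset.card_sdiff_of_subset
        (by intro j hj; exact Finset.mem_Icc.2 ((hTmem j).1 hj).1), Nat.card_Icc]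
      omega
    have hcard4 : F4.card = k' - 1 := by
      have hinj4 : Set.InjOn
          (fun a => if (G i).Adj (v (2*a)) (v (2*p-1)) then s(v (2*a-1), v (2*k'-1))
            else s(v (2*a), v (2*p-1))) ↑(Finset.Icc 1 (k'-1)) := by
        intro a ha b hb h
        have hba := Finset.mem_Icc.1 (Finset.mem_coe.1 ha)
        have hbb := Finset.mem_Icc.1 (Finset.mem_coe.1 hb)
        try simp only [] at h
        split_ifs at h <;>
          rcases key2 _ _ _ _ (by omega) (by omega) (by omega) (by omega) h with
            ⟨q1,q2⟩|⟨q1,q2⟩ <;> omega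
      rw [hF4def, Finset.card_image_of_injOn hinj4, Nat.card_Icc]
      omega
    have hcard5 : F5.card = (p-1) - l' := by
      have hinj5 : Set.InjOn
          (fun a => if (G i).Adj (v 0) (v (2*a-1)) then s(v (2*l'), v (2*a))
            else s(v 0, v (2*a-1))) ↑(Finset.Icc (l'+1) (p-1)) := by
        intro a ha b hb h
        have hba := Finset.mem_Icc.1 (Finset.mem_coe.1 ha)
        have hbb := Finset.mem_Icc.1 (Finset.mem_coe.1 hb)
        try simp only [] at h
        split_ifs at h <;>
          rcases key2 _ _ _ _ (by omega) (by omega) (by omega) (by omega) h with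
            ⟨q1,q2⟩|⟨q1,q2⟩ <;> omega
      rw [hF5def, Finset.card_image_of_injOn hinj5, Nat.card_Icc]
      omega
    have d12 : Disjoint F1 F2 := Finset.disjoint_left.2 (by
      intro x hxA hxB
      rw [hF1def, Finset.mem_singleton] at hxA
      have hEa : s(v 0, v (2*p-1)) = x := hxA.symm
      rw [hF2def] at hxB
      obtain ⟨b, hmB, hEb⟩ := Finset.mem_image.1 hxB
      have hbb := Finset.mem_Icc.1 (Finset.mem_sdiff.1 hmB).1
      have hEq := hEa.trans hEb.symm
      try simp only [] at hEq
      first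
        | (split_ifs at hEq <;>
            rcases key2 _ _ _ _ (by omega) (by omega) (by omega) (by omega) hEq with ⟨q1,q2⟩|⟨q1,q2⟩ <;> omega)
        | (rcases key2 _ _ _ _ (by omega) (by omega) (by omega) (by omega) hEq with ⟨q1,q2⟩|⟨q1,q2⟩ <;> omega))
    have d13 : Disjoint F1 F3 := Finset.disjoint_left.2 (by
      intro x hxA hxB
      rw [hF1def, Finset.mem_singleton] at hxA
      have hEa : s(v 0, v (2*p-1)) = x := hxA.symm
      rw [hF3def] at hxB
      obtain ⟨b, hmB, hEb⟩ := Finset.mem_image.1 hxB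
      have hbb := Finset.mem_Icc.1 (Finset.mem_sdiff.1 hmB).1
      have hEq := hEa.trans hEb.symm
      try simp only [] at hEq
      first
        | (split_ifs at hEq <;>
            rcases key2 _ _ _ _ (by omega) (by omega) (by omega) (by omega) hEq with ⟨q1,q2⟩|⟨q1,q2⟩ <;> omega)
        | (rcases key2 _ _ _ _ (by omega) (by omega) (by omega) (by omega) hEq with ⟨q1,q2⟩|⟨q1,q2⟩ <;> omega))
    have d14 : Disjoint F1 F4 := Finset.disjoint_left.2 (by
      intro x hxA hxB
      rw [hF1def, Finset.mem_singleton] at hxA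
      have hEa : s(v 0, v (2*p-1)) = x := hxA.symm
      rw [hF4def] at hxB
      obtain ⟨b, hmB, hEb⟩ := Finset.mem_image.1 hxB
      have hbb := Finset.mem_Icc.1 hmB
      have hEq := hEa.trans hEb.symm
      try simp only [] at hEq
      first
        | (split_ifs at hEq <;>
            rcases key2 _ _ _ _ (by omega) (by omega) (by omega) (by omega) hEq with ⟨q1,q2⟩|⟨q1,q2⟩ <;> omega)
        | (rcases key2 _ _ _ _ (by omega) (by omega) (by omega) (by omega) hEq with ⟨q1,q2⟩|⟨q1,q2⟩ <;> omega))
    have d15 : Disjoint F1 F5 := Finset.disjoint_left.2 (by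
      intro x hxA hxB
      rw [hF1def, Finset.mem_singleton] at hxA
      have hEa : s(v 0, v (2*p-1)) = x := hxA.symm
      rw [hF5def] at hxB
      obtain ⟨b, hmB, hEb⟩ := Finset.mem_image.1 hxB
      have hbb := Finset.mem_Icc.1 hmB
      have hEq := hEa.trans hEb.symm
      try simp only [] at hEq
      first
        | (split_ifs at hEq <;>
            rcases key2 _ _ _ _ (by omega) (by omega) (by omega) (by omega) hEq with ⟨q1,q2⟩|⟨q1,q2⟩ <;> omega)
        | (rcases key2 _ _ _ _ (by omega) (by omega) (by omega) (by omega) hEq with ⟨q1,q2⟩|⟨q1,q2⟩ <;> omega))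
    have d23 : Disjoint F2 F3 := Finset.disjoint_left.2 (by
      intro x hxA hxB
      rw [hF2def] at hxA
      obtain ⟨a, hmA, hEa⟩ := Finset.mem_image.1 hxA
      have hba := Finset.mem_Icc.1 (Finset.mem_sdiff.1 hmA).1
      rw [hF3def] at hxB
      obtain ⟨b, hmB, hEb⟩ := Finset.mem_image.1 hxB
      have hbb := Finset.mem_Icc.1 (Finset.mem_sdiff.1 hmB).1
      have hEq := hEa.trans hEb.symm
      try simp only [] at hEq
      first
        | (split_ifs at hEq <;>
            rcases key2 _ _ _ _ (by omega) (by omega) (by omega) (by omega) hEq with ⟨q1,q2⟩|⟨q1,q2⟩ <;> omega)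
        | (rcases key2 _ _ _ _ (by omega) (by omega) (by omega) (by omega) hEq with ⟨q1,q2⟩|⟨q1,q2⟩ <;> omega))
    have d24 : Disjoint F2 F4 := Finset.disjoint_left.2 (by
      intro x hxA hxB
      rw [hF2def] at hxA
      obtain ⟨a, hmA, hEa⟩ := Finset.mem_image.1 hxA
      have hba := Finset.mem_Icc.1 (Finset.mem_sdiff.1 hmA).1
      rw [hF4def] at hxB
      obtain ⟨b, hmB, hEb⟩ := Finset.mem_image.1 hxB
      have hbb := Finset.mem_Icc.1 hmB
      have hEq := hEa.trans hEb.symm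
      try simp only [] at hEq
      first
        | (split_ifs at hEq <;>
            rcases key2 _ _ _ _ (by omega) (by omega) (by omega) (by omega) hEq with ⟨q1,q2⟩|⟨q1,q2⟩ <;> omega)
        | (rcases key2 _ _ _ _ (by omega) (by omega) (by omega) (by omega) hEq with ⟨q1,q2⟩|⟨q1,q2⟩ <;> omega))
    have d25 : Disjoint F2 F5 := Finset.disjoint_left.2 (by
      intro x hxA hxB
      rw [hF2def] at hxA
      obtain ⟨a, hmA, hEa⟩ := Finset.mem_image.1 hxA
      have hba := Finset.mem_Icc.1 (Finset.mem_sdiff.1 hmA).1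
      rw [hF5def] at hxB
      obtain ⟨b, hmB, hEb⟩ := Finset.mem_image.1 hxB
      have hbb := Finset.mem_Icc.1 hmB
      have hEq := hEa.trans hEb.symm
      try simp only [] at hEq
      first
        | (split_ifs at hEq <;>
            rcases key2 _ _ _ _ (by omega) (by omega) (by omega) (by omega) hEq with ⟨q1,q2⟩|⟨q1,q2⟩ <;> omega)
        | (rcases key2 _ _ _ _ (by omega) (by omega) (by omega) (by omega) hEq with ⟨q1,q2⟩|⟨q1,q2⟩ <;> omega))
    have d34 : Disjoint F3 F4 := Finset.disjoint_left.2 (by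
      intro x hxA hxB
      rw [hF3def] at hxA
      obtain ⟨a, hmA, hEa⟩ := Finset.mem_image.1 hxA
      have hba := Finset.mem_Icc.1 (Finset.mem_sdiff.1 hmA).1
      rw [hF4def] at hxB
      obtain ⟨b, hmB, hEb⟩ := Finset.mem_image.1 hxB
      have hbb := Finset.mem_Icc.1 hmB
      have hEq := hEa.trans hEb.symm
      try simp only [] at hEq
      first
        | (split_ifs at hEq <;>
            rcases key2 _ _ _ _ (by omega) (by omega) (by omega) (by omega) hEq with ⟨q1,q2⟩|⟨q1,q2⟩ <;> omega)
        | (rcases key2 _ _ _ _ (by omega) (by omega) (by omega) (by omega) hEq with ⟨q1,q2⟩|⟨q1,q2⟩ <;> omega))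
    have d35 : Disjoint F3 F5 := Finset.disjoint_left.2 (by
      intro x hxA hxB
      rw [hF3def] at hxA
      obtain ⟨a, hmA, hEa⟩ := Finset.mem_image.1 hxA
      have hba := Finset.mem_Icc.1 (Finset.mem_sdiff.1 hmA).1
      rw [hF5def] at hxB
      obtain ⟨b, hmB, hEb⟩ := Finset.mem_image.1 hxB
      have hbb := Finset.mem_Icc.1 hmB
      have hEq := hEa.trans hEb.symm
      try simp only [] at hEq
      first
        | (split_ifs at hEq <;>
            rcases key2 _ _ _ _ (by omega) (by omega) (by omega) (by omega) hEq with ⟨q1,q2⟩|⟨q1,q2⟩ <;> omega)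
        | (rcases key2 _ _ _ _ (by omega) (by omega) (by omega) (by omega) hEq with ⟨q1,q2⟩|⟨q1,q2⟩ <;> omega))
    have d45 : Disjoint F4 F5 := Finset.disjoint_left.2 (by
      intro x hxA hxB
      rw [hF4def] at hxA
      obtain ⟨a, hmA, hEa⟩ := Finset.mem_image.1 hxA
      have hba := Finset.mem_Icc.1 hmA
      rw [hF5def] at hxB
      obtain ⟨b, hmB, hEb⟩ := Finset.mem_image.1 hxB
      have hbb := Finset.mem_Icc.1 hmB
      have hEq := hEa.trans hEb.symm
      try simp only [] at hEq
      first
        | (split_ifs at hEq <;>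
            rcases key2 _ _ _ _ (by omega) (by omega) (by omega) (by omega) hEq with ⟨q1,q2⟩|⟨q1,q2⟩ <;> omega)
        | (rcases key2 _ _ _ _ (by omega) (by omega) (by omega) (by omega) hEq with ⟨q1,q2⟩|⟨q1,q2⟩ <;> omega))
    by_cases hlink : ∃ j ∈ S, ∃ k ∈ T, j < k
    · obtain ⟨j0, hj0S, k0, hk0T, hjk0⟩ := hlink
      have hj0 := (hSmem j0).1 hj0S
      have hk0 := (hTmem k0).1 hk0T
      set F6 : Finset (Sym2 V) := {s(v (2*j0-1), v (2*k0))} with hF6def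
      have hsub6 : ↑F6 ⊆ ((G i)ᶜ).edgeSet := by
        intro x hx
        rw [Finset.mem_coe, hF6def, Finset.mem_singleton] at hx
        subst hx
        refine hmiss (2*j0-1) (2*k0) (by omega) (by omega) (by omega) ?_
        intro hx'
        exact hc3 j0 k0 (by omega) (by omega) (by omega) ⟨hj0.2, hk0.2, hx'⟩
      have hcard6 : F6.card = 1 := by rw [hF6def]; exact Finset.card_singleton _
      have d16 : Disjoint F1 F6 := Finset.disjoint_left.2 (by
        intro x hxA hxB
        rw [hF1def, Finset.mem_singleton] at hxA
        have hEa : s(v 0, v (2*p-1)) = x := hxA.symm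
        rw [hF6def, Finset.mem_singleton] at hxB
        have hEb : s(v (2*j0-1), v (2*k0)) = x := hxB.symm
        have hEq := hEa.trans hEb.symm
        try simp only [] at hEq
        first
          | (split_ifs at hEq <;>
              rcases key2 _ _ _ _ (by omega) (by omega) (by omega) (by omega) hEq with ⟨q1,q2⟩|⟨q1,q2⟩ <;> omega)
          | (rcases key2 _ _ _ _ (by omega) (by omega) (by omega) (by omega) hEq with ⟨q1,q2⟩|⟨q1,q2⟩ <;> omega))
      have d26 : Disjoint F2 F6 := Finset.disjoint_left.2 (by
        intro x hxA hxB
        rw [hF2def] at hxA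
        obtain ⟨a, hmA, hEa⟩ := Finset.mem_image.1 hxA
        have hba := Finset.mem_Icc.1 (Finset.mem_sdiff.1 hmA).1
        rw [hF6def, Finset.mem_singleton] at hxB
        have hEb : s(v (2*j0-1), v (2*k0)) = x := hxB.symm
        have hEq := hEa.trans hEb.symm
        try simp only [] at hEq
        first
          | (split_ifs at hEq <;>
              rcases key2 _ _ _ _ (by omega) (by omega) (by omega) (by omega) hEq with ⟨q1,q2⟩|⟨q1,q2⟩ <;> omega)
          | (rcases key2 _ _ _ _ (by omega) (by omega) (by omega) (by omega) hEq with ⟨q1,q2⟩|⟨q1,q2⟩ <;> omega))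
      have d36 : Disjoint F3 F6 := Finset.disjoint_left.2 (by
        intro x hxA hxB
        rw [hF3def] at hxA
        obtain ⟨a, hmA, hEa⟩ := Finset.mem_image.1 hxA
        have hba := Finset.mem_Icc.1 (Finset.mem_sdiff.1 hmA).1
        rw [hF6def, Finset.mem_singleton] at hxB
        have hEb : s(v (2*j0-1), v (2*k0)) = x := hxB.symm
        have hEq := hEa.trans hEb.symm
        try simp only [] at hEq
        first
          | (split_ifs at hEq <;>
              rcases key2 _ _ _ _ (by omega) (by omega) (by omega) (by omega) hEq with ⟨q1,q2⟩|⟨q1,q2⟩ <;> omega)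
          | (rcases key2 _ _ _ _ (by omega) (by omega) (by omega) (by omega) hEq with ⟨q1,q2⟩|⟨q1,q2⟩ <;> omega))
      have d46 : Disjoint F4 F6 := Finset.disjoint_left.2 (by
        intro x hxA hxB
        rw [hF4def] at hxA
        obtain ⟨a, hmA, hEa⟩ := Finset.mem_image.1 hxA
        have hba := Finset.mem_Icc.1 hmA
        rw [hF6def, Finset.mem_singleton] at hxB
        have hEb : s(v (2*j0-1), v (2*k0)) = x := hxB.symm
        have hEq := hEa.trans hEb.symm
        try simp only [] at hEq
        first
          | (split_ifs at hEq <;>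
              rcases key2 _ _ _ _ (by omega) (by omega) (by omega) (by omega) hEq with ⟨q1,q2⟩|⟨q1,q2⟩ <;> omega)
          | (rcases key2 _ _ _ _ (by omega) (by omega) (by omega) (by omega) hEq with ⟨q1,q2⟩|⟨q1,q2⟩ <;> omega))
      have d56 : Disjoint F5 F6 := Finset.disjoint_left.2 (by
        intro x hxA hxB
        rw [hF5def] at hxA
        obtain ⟨a, hmA, hEa⟩ := Finset.mem_image.1 hxA
        have hba := Finset.mem_Icc.1 hmA
        rw [hF6def, Finset.mem_singleton] at hxB
        have hEb : s(v (2*j0-1), v (2*k0)) = x := hxB.symm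
        have hEq := hEa.trans hEb.symm
        try simp only [] at hEq
        first
          | (split_ifs at hEq <;>
              rcases key2 _ _ _ _ (by omega) (by omega) (by omega) (by omega) hEq with ⟨q1,q2⟩|⟨q1,q2⟩ <;> omega)
          | (rcases key2 _ _ _ _ (by omega) (by omega) (by omega) (by omega) hEq with ⟨q1,q2⟩|⟨q1,q2⟩ <;> omega))
      refine ⟨F1 ∪ F2 ∪ F3 ∪ F4 ∪ F5 ∪ F6, ?_, ?_⟩
      · intro x hx
        simp only [Finset.coe_union, Set.mem_union] at hx
        rcases hx with ((((h|h)|h)|h)|h)|h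
        exacts [hsub1 h, hsub2 h, hsub3 h, hsub4 h, hsub5 h, hsub6 h]
      · have e1 : (F1 ∪ F2 ∪ F3 ∪ F4 ∪ F5 ∪ F6).card =
            F1.card + F2.card + F3.card + F4.card + F5.card + F6.card := by
          rw [Finset.card_union_of_disjoint (by
                simp only [Finset.disjoint_union_left]; exact ⟨⟨⟨⟨d16,d26⟩,d36⟩,d46⟩,d56⟩),
              Finset.card_union_of_disjoint (by
                simp only [Finset.disjoint_union_left]; exact ⟨⟨⟨d15,d25⟩,d35⟩,d45⟩),
              Finset.card_union_of_disjoint (by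
                simp only [Finset.disjoint_union_left]; exact ⟨⟨d14,d24⟩,d34⟩),
              Finset.card_union_of_disjoint (by
                simp only [Finset.disjoint_union_left]; exact ⟨d13,d23⟩),
              Finset.card_union_of_disjoint d12]
        rw [e1, hcard1, hcard2, hcard3, hcard4, hcard5, hcard6]
        omega
    · refine ⟨F1 ∪ F2 ∪ F3 ∪ F4 ∪ F5, ?_, ?_⟩
      · intro x hx
        simp only [Finset.coe_union, Set.mem_union] at hx
        rcases hx with (((h|h)|h)|h)|h
        exacts [hsub1 h, hsub2 h, hsub3 h, hsub4 h, hsub5 h]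
      · have e1 : (F1 ∪ F2 ∪ F3 ∪ F4 ∪ F5).card =
            F1.card + F2.card + F3.card + F4.card + F5.card := by
          rw [Finset.card_union_of_disjoint (by
                simp only [Finset.disjoint_union_left]; exact ⟨⟨⟨d15,d25⟩,d35⟩,d45⟩),
              Finset.card_union_of_disjoint (by
                simp only [Finset.disjoint_union_left]; exact ⟨⟨d14,d24⟩,d34⟩),
              Finset.card_union_of_disjoint (by
                simp only [Finset.disjoint_union_left]; exact ⟨d13,d23⟩),
              Finset.card_union_of_disjoint d12]
        rw [e1, hcard1, hcard2, hcard3, hcard4, hcard5]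
        by_cases hSne : S.Nonempty
        · by_cases hTne : T.Nonempty
          · have hnl : ∀ j ∈ S, ∀ k ∈ T, k < j := by
              intro j hj k hk
              by_contra hcon
              push_neg at hcon
              have hjk : j ≠ k := by
                intro hEq
                subst hEq
                exact hc2 j ((hSmem j).1 hj).1.1 ((hSmem j).1 hj).1.2
                  ⟨((hSmem j).1 hj).2, ((hTmem j).1 hk).2⟩
              exact hlink ⟨j, hj, k, hk, by omega⟩
            have hmm := hnl (S.min' hSne) (S.min'_mem hSne) (T.max' hTne) (T.max'_mem hTne)
            have hminS1 : 1 ≤ S.min' hSne := ((hSmem _).1 (S.min'_mem hSne)).1.1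
            have hmaxT : T.max' hTne ≤ p-1 := ((hTmem _).1 (T.max'_mem hTne)).1.2
            have hsS : S.card ≤ k' + 1 - S.min' hSne := by
              have h1 : S.card ≤ (Finset.Icc (S.min' hSne) k').card := Finset.card_le_card
                (fun j hj => Finset.mem_Icc.2 ⟨S.min'_le j hj, hk'spec.2.1 j hj⟩)
              rw [Nat.card_Icc] at h1
              omega
            have htT : T.card ≤ (T.max' hTne) + 1 - l' := by
              have h1 : T.card ≤ (Finset.Icc l' (T.max' hTne)).card := Finset.card_le_card
                (fun j hj => Finset.mem_Icc.2 ⟨hl'spec.2.1 j hj, T.le_max' j hj⟩)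
              rw [Nat.card_Icc] at h1
              omega
            omega
          · have ht0 : T.card = 0 := by
              rw [Finset.card_eq_zero]
              exact Finset.not_nonempty_iff_eq_empty.1 hTne
            omega
        · have hs0 : S.card = 0 := by
            rw [Finset.card_eq_zero]
            exact Finset.not_nonempty_iff_eq_empty.1 hSne
          omega
  refine ⟨key, ?_⟩
  have hce : (Finset.univ.erase red).card = c - 1 := by
    rw [Finset.card_erase_of_mem (Finset.mem_univ red), Finset.card_univ, Fintype.card_fin]
  calc (c - 1) * (2 * p - 2) = (Finset.univ.erase red).card * (2 * p - 2) := by rw [hce]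
    _ = (Finset.univ.erase red).card • (2 * p - 2) := by rw [smul_eq_mul]
    _ ≤ ∑ i ∈ Finset.univ.erase red, ((G i)ᶜ).edgeSet.ncard := by
        apply Finset.card_nsmul_le_sum
        intro x hx
        exact key x (Finset.ne_of_mem_erase hx)
end

section
/- Let ℓ be a positive integer and let G be a connected c-edge-coloured multigraph on n vertices with at least c·ℓ + 1 edges, where c ≥ 4. Then there exist colours j and l with j ≠ l such that the (c−1)-edge-coloured multigraph G' obtained from G by recolouring every edge of colour j with colour l and deleting resulting parallel edges of the same colour (i.e., replacing G^l by the union of G^j and G^l and removing colour j) satisfies: G' is connected; G' has at least (c−1)·ℓ + 1 edges; if G' has a proper Hamiltonian path then so does G; and if rd(G) = c then rd(G') = c−1. -/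
/-- If `G` is a connected `c`-edge-coloured multigraph (`c ≥ 4`) with at
least `c·ℓ + 1` edges, then there are colours `j ≠ l` such that the multigraph `G'` obtained by
recolouring every edge of colour `j` with colour `l` (deleting resulting parallel edges of the
same colour, i.e. replacing the colour class `l` by `G j ⊔ G l` and emptying colour class `j`)
is connected, has at least `(c-1)·ℓ + 1` edges, a proper Hamiltonian path of `G'` yields one of
`G`, and if `rd(G) = c` then `rd(G') = c - 1`. -/
theorem stmt9 {V : Type*} [Fintype V] {c ℓ : ℕ} (G : Fin c → SimpleGraph V)
    (hℓ : 1 ≤ ℓ) (hc : 4 ≤ c)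
    (hconn : (⨆ i, G i).Connected)
    (hm : c * ℓ + 1 ≤ numEdges G) :
    ∃ j l : Fin c, j ≠ l ∧
      ∀ G' : Fin c → SimpleGraph V,
        G' = Function.update (Function.update G j ⊥) l (G j ⊔ G l) →
        (⨆ i, G' i).Connected ∧
        (c - 1) * ℓ + 1 ≤ numEdges G' ∧
        (HasProperHamPath G' → HasProperHamPath G) ∧
        (minRainbowDeg G = c → minRainbowDeg G' = c - 1) := by

  classical
  obtain ⟨j, -, hj⟩ := Finset.exists_min_image (Finset.univ : Finset (Fin c))
      (fun i => (G i).edgeSet.ncard) ⟨⟨0, by omega⟩, Finset.mem_univ _⟩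
  have : Nontrivial (Fin c) := Fin.nontrivial_iff_two_le.mpr (by omega)
  obtain ⟨l, hl⟩ := exists_ne j
  refine ⟨j, l, hl.symm, ?_⟩
  intro G' hG'
  have hGl : G' l = G j ⊔ G l := by rw [hG']; simp
  have hGj : G' j = ⊥ := by
    rw [hG', Function.update_of_ne hl.symm, Function.update_self]
  have hGo : ∀ i, i ≠ j → i ≠ l → G' i = G i := by
    intro i hij hil
    rw [hG', Function.update_of_ne hil, Function.update_of_ne hij]
  have hsup : (⨆ i, G' i) = ⨆ i, G i := by
    apply le_antisymm
    · refine iSup_le fun i => ?_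
      by_cases hij : i = j
      · subst hij; rw [hGj]; exact bot_le
      · by_cases hil : i = l
        · rw [hil, hGl]; exact sup_le (le_iSup G j) (le_iSup G l)
        · rw [hGo i hij hil]; exact le_iSup G i
    · refine iSup_le fun i => ?_
      by_cases hij : i = j
      · subst hij
        exact le_trans (le_trans le_sup_left hGl.ge) (le_iSup G' l)
      · by_cases hil : i = l
        · rw [hil]
          exact le_trans (le_trans le_sup_right hGl.ge) (le_iSup G' l)
        · rw [← hGo i hij hil]; exact le_iSup G' i
  refine ⟨by rw [hsup]; exact hconn, ?_, ?_, ?_⟩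
  · -- edge count
    have hsub : ∀ i : Fin c, i ≠ j → (G i).edgeSet.ncard ≤ (G' i).edgeSet.ncard := by
      intro i hij
      by_cases hil : i = l
      · subst hil
        exact Set.ncard_le_ncard (SimpleGraph.edgeSet_mono (hGl ▸ le_sup_right))
          (Set.toFinite _)
      · rw [hGo i hij hil]
    have key : ∑ i ∈ Finset.univ.erase j, (G i).edgeSet.ncard ≤ numEdges G' := by
      calc ∑ i ∈ Finset.univ.erase j, (G i).edgeSet.ncard
          ≤ ∑ i ∈ Finset.univ.erase j, (G' i).edgeSet.ncard :=
            Finset.sum_le_sum fun i hi => hsub i (Finset.ne_of_mem_erase hi)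
        _ ≤ ∑ i : Fin c, (G' i).edgeSet.ncard :=
            Finset.sum_le_sum_of_subset (Finset.erase_subset _ _)
    have hsplit : numEdges G
        = (G j).edgeSet.ncard + ∑ i ∈ Finset.univ.erase j, (G i).edgeSet.ncard :=
      (Finset.add_sum_erase _ _ (Finset.mem_univ j)).symm
    have hmin : c * (G j).edgeSet.ncard ≤ numEdges G := by
      calc c * (G j).edgeSet.ncard = ∑ _i : Fin c, (G j).edgeSet.ncard := by
            simp [Finset.sum_const, mul_comm]
        _ ≤ ∑ i : Fin c, (G i).edgeSet.ncard :=
            Finset.sum_le_sum fun i _ => hj i (Finset.mem_univ i)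
    have harith : (c - 1) * ℓ + 1 + (G j).edgeSet.ncard ≤ numEdges G := by
      obtain ⟨c', rfl⟩ : ∃ c', c = c' + 4 := ⟨c - 4, by omega⟩
      set a := (G j).edgeSet.ncard
      have hc1 : c' + 4 - 1 = c' + 3 := by omega
      rw [hc1]
      rcases le_or_gt a ℓ with h | h
      · nlinarith [hm]
      · nlinarith [hmin, hm]
    omega
  · -- ham path
    rintro ⟨v, κ, ⟨hinj, hadj, hcol⟩, hsurj⟩
    set m := Fintype.card V with hmcard
    have hnj : ∀ i, i + 1 < m → κ i ≠ j := by
      intro i hi hji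
      have := hadj i hi
      rw [hji, hGj] at this
      exact this
    refine ⟨v, fun i => if κ i = l ∧ (G j).Adj (v i) (v (i + 1)) then j else κ i,
      ⟨hinj, ?_, ?_⟩, hsurj⟩
    · intro i hi
      dsimp only
      by_cases h : κ i = l ∧ (G j).Adj (v i) (v (i + 1))
      · rw [if_pos h]; exact h.2
      · rw [if_neg h]
        have ha := hadj i hi
        by_cases hil : κ i = l
        · rw [hil, hGl] at ha
          rw [hil]
          rcases ha with ha | ha
          · exact absurd ⟨hil, ha⟩ h
          · exact ha
        · rw [hGo _ (hnj i hi) hil] at ha; exact ha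
    · intro i hi
      dsimp only
      have h1 : i + 1 < m := by omega
      by_cases ha : κ i = l ∧ (G j).Adj (v i) (v (i + 1)) <;>
        by_cases hb : κ (i + 1) = l ∧ (G j).Adj (v (i + 1)) (v (i + 1 + 1))
      · exact absurd (ha.1.trans hb.1.symm) (hcol i hi)
      · rw [if_pos ha, if_neg hb]
        exact (hnj (i + 1) (by omega)).symm
      · rw [if_neg ha, if_pos hb]
        exact hnj i h1
      · rw [if_neg ha, if_neg hb]
        exact hcol i hi
  · -- rainbow degree
    intro hrd
    have hV : Nonempty V := by
      by_contra h
      rw [not_nonempty_iff] at h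
      have hre : Set.range (rainbowDeg G) = ∅ := by
        simp [Set.range_eq_empty]
      rw [minRainbowDeg, hre, Nat.sInf_empty] at hrd
      omega
    have hall : ∀ (x : V) (i : Fin c), ∃ y, (G i).Adj x y := by
      intro x
      have h1 : c ≤ rainbowDeg G x := by
        have h0 : minRainbowDeg G ≤ rainbowDeg G x := Nat.sInf_le ⟨x, rfl⟩
        rw [hrd] at h0
        exact h0
      have h2 : {i : Fin c | ∃ y, (G i).Adj x y} = Set.univ := by
        apply Set.eq_of_subset_of_ncard_le (Set.subset_univ _)
        rw [Set.ncard_univ, Nat.card_eq_fintype_card, Fintype.card_fin]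
        exact h1
      exact fun i => (Set.eq_univ_iff_forall.mp h2) i
    have hG'deg : ∀ x, rainbowDeg G' x = c - 1 := by
      intro x
      have hset : {i : Fin c | ∃ y, (G' i).Adj x y} = {j}ᶜ := by
        ext i
        simp only [Set.mem_setOf_eq, Set.mem_compl_iff, Set.mem_singleton_iff]
        constructor
        · rintro ⟨y, hy⟩ rfl
          rw [hGj] at hy
          exact hy
        · intro hij
          by_cases hil : i = l
          · obtain ⟨y, hy⟩ := hall x l
            exact ⟨y, by rw [hil, hGl]; exact Or.inr hy⟩
          · obtain ⟨y, hy⟩ := hall x i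
            exact ⟨y, by rw [hGo i hij hil]; exact hy⟩
      rw [rainbowDeg, hset, Set.compl_eq_univ_diff,
        Set.ncard_diff (Set.subset_univ _), Set.ncard_univ,
        Nat.card_eq_fintype_card, Fintype.card_fin, Set.ncard_singleton]
    apply le_antisymm
    · exact Nat.sInf_le ⟨hV.some, hG'deg _⟩
    · refine le_csInf ⟨_, ⟨hV.some, rfl⟩⟩ ?_
      rintro b ⟨x, rfl⟩
      rw [hG'deg x]
end

section
/- For every odd n ≥ 9, the following 2-edge-coloured multigraph on n vertices, with colours red and blue, has exactly (n choose 2) + (n-2 choose 2) edges and has no proper Hamiltonian path: take a rainbow complete 2-edge-coloured multigraph on n−2 vertices (every pair of its vertices joined by both a red and a blue edge), add two new vertices x_1 and x_2, add a red edge x_1x_2, and add a red edge from each of x_1, x_2 to each of the n−2 original vertices. -/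

lemma ncard_edgeSet_top (V : Type*) [Fintype V] [DecidableEq V] :
    (⊤ : SimpleGraph V).edgeSet.ncard = (Fintype.card V).choose 2 := by
  rw [Set.ncard_eq_toFinset_card']
  rw [← SimpleGraph.card_edgeFinset_top_eq_card_choose_two (V := V)]
  congr 1

lemma ncard_edgeSet_fromRel {n : ℕ} (h9 : 9 ≤ n) :
    (SimpleGraph.fromRel (fun (u v : Fin n) => 2 ≤ (u : ℕ) ∧ 2 ≤ (v : ℕ))).edgeSet.ncard
      = (n - 2).choose 2 := by
  set f : Fin (n - 2) → Fin n := fun k => ⟨(k : ℕ) + 2, by omega⟩ with hf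
  have hfinj : Function.Injective f := by
    intro a b hab
    have : (a : ℕ) + 2 = (b : ℕ) + 2 := congrArg Fin.val hab
    exact Fin.ext (by omega)
  have himg : Sym2.map f '' (⊤ : SimpleGraph (Fin (n - 2))).edgeSet
      = (SimpleGraph.fromRel (fun (u v : Fin n) => 2 ≤ (u : ℕ) ∧ 2 ≤ (v : ℕ))).edgeSet := by
    ext e
    constructor
    · rintro ⟨e', he', rfl⟩
      induction e' using Sym2.ind with
      | _ a b =>
        rw [SimpleGraph.mem_edgeSet] at he'
        rw [Sym2.map_pair_eq, SimpleGraph.mem_edgeSet, SimpleGraph.fromRel_adj]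
        have hab : a ≠ b := he'.ne
        refine ⟨fun h => hab (hfinj h), Or.inl ⟨?_, ?_⟩⟩ <;> simp [hf]
    · intro he
      induction e using Sym2.ind with
      | _ u v =>
        rw [SimpleGraph.mem_edgeSet, SimpleGraph.fromRel_adj] at he
        obtain ⟨hne, hr⟩ := he
        have hu : 2 ≤ (u : ℕ) ∧ 2 ≤ (v : ℕ) := by rcases hr with h | h <;> omega
        refine ⟨s(⟨(u : ℕ) - 2, by omega⟩, ⟨(v : ℕ) - 2, by omega⟩), ?_, ?_⟩
        · rw [SimpleGraph.mem_edgeSet]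
          simp only [SimpleGraph.top_adj]
          intro h
          have : (u : ℕ) - 2 = (v : ℕ) - 2 := congrArg Fin.val h
          exact hne (Fin.ext (by omega))
        · rw [Sym2.map_pair_eq]
          have h1 : f ⟨(u : ℕ) - 2, by omega⟩ = u :=
            Fin.ext (show (u : ℕ) - 2 + 2 = (u : ℕ) by omega)
          have h2 : f ⟨(v : ℕ) - 2, by omega⟩ = v :=
            Fin.ext (show (v : ℕ) - 2 + 2 = (v : ℕ) by omega)
          rw [h1, h2]
  rw [← himg, Set.ncard_image_of_injective _ (Sym2.map.injective hfinj),
    ncard_edgeSet_top, Fintype.card_fin]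

lemma fin2cases (a : Fin 2) : a = 0 ∨ a = 1 := by omega

/-- For every odd `n ≥ 9`, the 2-edge-coloured multigraph on `Fin n`
(colour `0` = red, colour `1` = blue) obtained from a rainbow complete 2-edge-coloured
multigraph on the `n - 2` vertices `{2, …, n-1}` by adding the two vertices `0 = x₁` and
`1 = x₂`, a red edge `x₁x₂`, and red edges from `x₁` and `x₂` to all other vertices
(so red is complete, blue is complete on `{2, …, n-1}`) has exactly
`(n choose 2) + (n-2 choose 2)` edges and no proper Hamiltonian path. -/
theorem stmt15 {n : ℕ} (h9 : 9 ≤ n) (hodd : Odd n) :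
    ∀ G : Fin 2 → SimpleGraph (Fin n),
      G = ![⊤, SimpleGraph.fromRel (fun (u v : Fin n) => 2 ≤ (u : ℕ) ∧ 2 ≤ (v : ℕ))] →
      numEdges G = n.choose 2 + (n - 2).choose 2 ∧ ¬ HasProperHamPath G := by
  intro G hG
  subst hG
  have hG0 : (![⊤, SimpleGraph.fromRel (fun (u v : Fin n) => 2 ≤ (u : ℕ) ∧ 2 ≤ (v : ℕ))] :
      Fin 2 → SimpleGraph (Fin n)) 0 = ⊤ := rfl
  have hG1 : (![⊤, SimpleGraph.fromRel (fun (u v : Fin n) => 2 ≤ (u : ℕ) ∧ 2 ≤ (v : ℕ))] :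
      Fin 2 → SimpleGraph (Fin n)) 1
      = SimpleGraph.fromRel (fun (u v : Fin n) => 2 ≤ (u : ℕ) ∧ 2 ≤ (v : ℕ)) := rfl
  constructor
  · rw [numEdges, Fin.sum_univ_two, hG0, hG1, ncard_edgeSet_top, Fintype.card_fin,
      ncard_edgeSet_fromRel h9]
  · rintro ⟨v, κ, ⟨hinj, hadj, hcol⟩, hsurj⟩
    rw [Fintype.card_fin] at hinj hadj hcol hsurj
    have hmod : n % 2 = 1 := Nat.odd_iff.mp hodd
    -- any edge touching a vertex with value < 2 is red (colour 0)
    have keyA : ∀ i, i + 1 < n → ((v i : ℕ) < 2 ∨ (v (i + 1) : ℕ) < 2) → κ i = 0 := by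
      intro i hi hlt
      rcases fin2cases (κ i) with h | h
      · exact h
      · exfalso
        have := hadj i hi
        rw [h, hG1, SimpleGraph.fromRel_adj] at this
        rcases this.2 with h2 | h2 <;> omega
    -- vertices with value < 2 sit at position 0 or n - 1
    have keyC : ∀ i, i < n → (v i : ℕ) < 2 → i = 0 ∨ i = n - 1 := by
      intro i hi hlt
      by_contra hcon
      push_neg at hcon
      have h0 : 0 < i := Nat.pos_of_ne_zero hcon.1
      obtain ⟨j, rfl⟩ := Nat.exists_eq_add_of_lt h0
      rw [zero_add] at *
      have hc1 : κ j = 0 := keyA j (by omega) (Or.inr hlt)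
      have hc2 : κ (j + 1) = 0 := keyA (j + 1) (by omega) (Or.inl hlt)
      exact hcol j (by omega) (hc1.trans hc2.symm)
    -- positions of the two special vertices
    obtain ⟨i₀, hi₀n, hi₀⟩ := hsurj ⟨0, by omega⟩
    obtain ⟨i₁, hi₁n, hi₁⟩ := hsurj ⟨1, by omega⟩
    have h01 : i₀ ≠ i₁ := by
      intro h
      rw [h, hi₁] at hi₀
      exact absurd (congrArg Fin.val hi₀) (by simp)
    have hv0 : (v i₀ : ℕ) < 2 := by rw [hi₀]; exact Nat.zero_lt_two
    have hv1 : (v i₁ : ℕ) < 2 := by rw [hi₁]; exact Nat.one_lt_two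
    have hends : (v 0 : ℕ) < 2 ∧ (v (n - 1) : ℕ) < 2 := by
      rcases keyC i₀ hi₀n hv0 with h0 | h0 <;> rcases keyC i₁ hi₁n hv1 with h1 | h1 <;>
        first
        | (exfalso; omega)
        | (subst h0; subst h1; exact ⟨hv0, hv1⟩)
        | (subst h0; subst h1; exact ⟨hv1, hv0⟩)
    -- colours alternate starting from red
    have hκ0 : κ 0 = 0 := keyA 0 (by omega) (Or.inl hends.1)
    have halt : ∀ j, j + 1 < n → κ j = if j % 2 = 0 then 0 else 1 := by
      intro j
      induction j with
      | zero => intro _; simpa using hκ0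
      | succ j ih =>
        intro hj
        have hne := hcol j (by omega)
        rw [ih (by omega)] at hne
        rcases Nat.even_or_odd j with he | he
        · have hj0 : j % 2 = 0 := Nat.even_iff.mp he
          rw [if_pos hj0] at hne
          rw [if_neg (by omega)]
          rcases fin2cases (κ (j + 1)) with h | h
          · exact absurd h.symm hne
          · exact h
        · have hj1 : j % 2 = 1 := Nat.odd_iff.mp he
          rw [if_neg (by omega)] at hne
          rw [if_pos (by omega)]
          rcases fin2cases (κ (j + 1)) with h | h
          · exact h
          · exact absurd h.symm hne
    -- the last edge must be red, but alternation makes it blue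
    have hlast : κ (n - 2) = 0 := by
      refine keyA (n - 2) (by omega) (Or.inr ?_)
      have h : n - 2 + 1 = n - 1 := by omega
      rw [h]; exact hends.2
    have hfin := halt (n - 2) (by omega)
    rw [if_neg (by omega), hlast] at hfin
    exact absurd hfin (by decide)
end

section
/- For every odd n ≥ 15, the following 2-edge-coloured multigraph on n vertices, with colours red and blue, has exactly (n choose 2) + (n-3 choose 2) + 3 edges, satisfies rd(G) = 2, and has no proper Hamiltonian path: take a set A of n−3 vertices with a blue edge between every pair of vertices of A, fix a vertex v in A, add three new vertices v_1, v_2, v_3 each joined to v by a blue edge, and finally add a red edge between every pair of the n vertices. -/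
section Stmt16Aux

lemma stmt16_top_ncard (m : ℕ) : (⊤ : SimpleGraph (Fin m)).edgeSet.ncard = m.choose 2 := by
  classical
  rw [← SimpleGraph.coe_edgeFinset, Set.ncard_coe_finset,
    SimpleGraph.card_edgeFinset_top_eq_card_choose_two, Fintype.card_fin]

lemma stmt16_edgeSet_map {V W : Type*} (f : V ↪ W) (G : SimpleGraph V) :
    (G.map f).edgeSet = Sym2.map f '' G.edgeSet := by
  ext e
  induction e using Sym2.ind with
  | _ a b =>
    simp only [SimpleGraph.mem_edgeSet, SimpleGraph.map_adj, Set.mem_image]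
    constructor
    · rintro ⟨u, w, huw, rfl, rfl⟩
      exact ⟨s(u, w), huw, rfl⟩
    · rintro ⟨e', he', hmap⟩
      induction e' using Sym2.ind with
      | _ u w =>
        rw [Sym2.map_pair_eq, Sym2.eq_iff] at hmap
        rcases hmap with ⟨h1, h2⟩ | ⟨h1, h2⟩
        · exact ⟨u, w, he', h1, h2⟩
        · exact ⟨w, u, (SimpleGraph.mem_edgeSet _).mp ((Sym2.eq_swap ▸ he')), h2, h1⟩

lemma stmt16_blue_ncard {n : ℕ} (h15 : 15 ≤ n) :
    (SimpleGraph.fromRel (fun (u v : Fin n) =>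
      (3 ≤ (u : ℕ) ∧ 3 ≤ (v : ℕ)) ∨ ((u : ℕ) < 3 ∧ (v : ℕ) = 3))).edgeSet.ncard
      = (n - 3).choose 2 + 3 := by
  classical
  set emb : Fin (n - 3) ↪ Fin n :=
    ⟨fun x => ⟨(x : ℕ) + 3, by omega⟩, show Function.Injective _ from by
      intro a b h
      simp only [Fin.mk.injEq, Fin.ext_iff] at h ⊢
      omega⟩ with hemb
  set K : SimpleGraph (Fin n) := (⊤ : SimpleGraph (Fin (n - 3))).map emb with hK
  set star : SimpleGraph (Fin n) :=
    SimpleGraph.fromRel (fun (u v : Fin n) => (u : ℕ) < 3 ∧ (v : ℕ) = 3) with hstar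
  have hdecomp : (SimpleGraph.fromRel (fun (u v : Fin n) =>
      (3 ≤ (u : ℕ) ∧ 3 ≤ (v : ℕ)) ∨ ((u : ℕ) < 3 ∧ (v : ℕ) = 3))) = K ⊔ star := by
    ext a b
    simp only [SimpleGraph.fromRel_adj, SimpleGraph.sup_adj, hK, SimpleGraph.map_adj,
      SimpleGraph.top_adj, hstar, ne_eq, hemb, Function.Embedding.coeFn_mk]
    constructor
    · rintro ⟨hne, h⟩
      rcases h with (⟨ha, hb⟩ | ⟨ha, hb⟩) | (⟨hb, ha⟩ | ⟨hb, ha⟩)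
      · refine Or.inl ⟨hne, ⟨(a : ℕ) - 3, by omega⟩, ⟨(b : ℕ) - 3, by omega⟩, ?_, ?_, ?_⟩
        · simp only [SimpleGraph.top_adj, ne_eq, Fin.mk.injEq]
          intro h'
          exact hne (Fin.ext (by omega))
        · exact Fin.ext (by simp; omega)
        · exact Fin.ext (by simp; omega)
      · exact Or.inr ⟨hne, Or.inl ⟨ha, hb⟩⟩
      · refine Or.inl ⟨hne, ⟨(a : ℕ) - 3, by omega⟩, ⟨(b : ℕ) - 3, by omega⟩, ?_, ?_, ?_⟩
        · simp only [SimpleGraph.top_adj, ne_eq, Fin.mk.injEq]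
          intro h'
          exact hne (Fin.ext (by omega))
        · exact Fin.ext (by simp; omega)
        · exact Fin.ext (by simp; omega)
      · exact Or.inr ⟨hne, Or.inr ⟨hb, ha⟩⟩
    · rintro (⟨-, u, w, huw, rfl, rfl⟩ | ⟨hne, h⟩)
      · refine ⟨?_, Or.inl (Or.inl ⟨by simp, by simp⟩)⟩
        simp only [ne_eq, Fin.mk.injEq]
        intro h'
        exact huw (Fin.ext (by omega))
      · exact ⟨hne, by tauto⟩
  rw [hdecomp, SimpleGraph.edgeSet_sup]
  have hdisj : Disjoint K.edgeSet star.edgeSet := by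
    rw [Set.disjoint_left]
    intro e
    induction e using Sym2.ind with
    | _ a b =>
      simp only [SimpleGraph.mem_edgeSet, hK, SimpleGraph.map_adj, hstar,
        SimpleGraph.fromRel_adj, hemb, Function.Embedding.coeFn_mk, SimpleGraph.top_adj]
      rintro ⟨-, u, w, huw, rfl, rfl⟩ ⟨-, (⟨h1, h2⟩ | ⟨h1, h2⟩)⟩ <;>
        (try simp only [Fin.val_mk] at h1 h2) <;> omega
  rw [Set.ncard_union_eq hdisj (Set.toFinite _) (Set.toFinite _)]
  have hKcard : K.edgeSet.ncard = (n - 3).choose 2 := by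
    rw [hK, stmt16_edgeSet_map, Set.ncard_image_of_injective _ (Sym2.map.injective emb.injective),
      stmt16_top_ncard]
  have hscard : star.edgeSet.ncard = 3 := by
    have hset : star.edgeSet = {s((⟨0, by omega⟩ : Fin n), ⟨3, by omega⟩),
        s((⟨1, by omega⟩ : Fin n), ⟨3, by omega⟩),
        s((⟨2, by omega⟩ : Fin n), ⟨3, by omega⟩)} := by
      ext e
      induction e using Sym2.ind with
      | _ a b =>
        simp only [SimpleGraph.mem_edgeSet, hstar, SimpleGraph.fromRel_adj, ne_eq,
          Set.mem_insert_iff, Set.mem_singleton_iff, Sym2.eq_iff, Fin.ext_iff]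
        constructor
        · rintro ⟨hne, h⟩
          try simp only [Fin.ext_iff] at hne
          omega
        · intro h
          constructor
          · try simp only [Fin.ext_iff]
            omega
          · omega
    rw [hset]
    rw [Set.ncard_eq_three]
    refine ⟨_, _, _, ?_, ?_, ?_, rfl⟩ <;> simp [Sym2.eq_iff, Fin.ext_iff]
  rw [hKcard, hscard]

set_option maxHeartbeats 1000000 in
open Fin.NatCast in
lemma stmt16_nopath {n : ℕ} (h15 : 15 ≤ n) (hodd : Odd n) :
    ¬ HasProperHamPath ![⊤, SimpleGraph.fromRel
      (fun (u v : Fin n) => (3 ≤ (u : ℕ) ∧ 3 ≤ (v : ℕ)) ∨ ((u : ℕ) < 3 ∧ (v : ℕ) = 3))] := by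
  rintro ⟨v, κ, ⟨hinj, hadj, hprop⟩, hsurj⟩
  rw [Fintype.card_fin] at hinj hadj hprop hsurj
  have hn2 : n % 2 = 1 := Nat.odd_iff.mp hodd
  set three : Fin n := ⟨3, by omega⟩ with hthree
  have hb : ∀ a b : Fin n, (SimpleGraph.fromRel
      (fun (u v : Fin n) => (3 ≤ (u : ℕ) ∧ 3 ≤ (v : ℕ) ∨ (u : ℕ) < 3 ∧ (v : ℕ) = 3))).Adj a b →
      (a : ℕ) < 3 → b = three := by
    intro a b hab ha
    rw [SimpleGraph.fromRel_adj] at hab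
    obtain ⟨hne, h⟩ := hab
    apply Fin.ext
    simp only [hthree, Fin.val_mk]
    omega
  have fin2 : ∀ a b : Fin 2, a ≠ b → b = a + 1 := by decide
  have halt : ∀ i, i + 1 < n → κ i = κ 0 + (i : Fin 2) := by
    intro i
    induction i with
    | zero => intro _; simp
    | succ k ih =>
      intro h
      have hk := ih (by omega)
      have hne := hprop k (by omega)
      rw [fin2 _ _ hne, hk]
      push_cast
      rw [add_assoc]
  set sv : ℕ := (1 - κ 0).val with hsv
  have hsv2 : sv < 2 := (1 - κ 0).isLt
  have hblue_iff : ∀ i, i + 1 < n → (κ i = 1 ↔ i % 2 = sv) := by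
    intro i hi
    rw [halt i hi]
    have h1 : ∀ a c : Fin 2, (a + c = 1 ↔ c = 1 - a) := by decide
    rw [h1, Fin.ext_iff, Fin.val_natCast]
  set bad : ℕ := if sv = 0 then n - 1 else 0 with hbad
  have key : ∀ p, p < n → ((v p : ℕ)) < 3 → p ≠ bad →
      ∃ q, q < n ∧ v q = three ∧
        ((p % 2 = sv ∧ q = p + 1) ∨ (¬(p % 2 = sv) ∧ p = q + 1)) := by
    intro p hp hval hpbad
    by_cases hpar : p % 2 = sv
    · have hp1 : p + 1 < n := by
        by_cases h0 : sv = 0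
        · have hb' : bad = n - 1 := by rw [hbad, if_pos h0]
          omega
        · omega
      have hκ := (hblue_iff p hp1).mpr hpar
      have ha := hadj p hp1
      rw [hκ] at ha
      have ha' : (SimpleGraph.fromRel
          (fun (u v : Fin n) => (3 ≤ (u : ℕ) ∧ 3 ≤ (v : ℕ) ∨ (u : ℕ) < 3 ∧ (v : ℕ) = 3))).Adj
          (v p) (v (p + 1)) := by simpa using ha
      exact ⟨p + 1, hp1, hb _ _ ha' hval, Or.inl ⟨hpar, rfl⟩⟩
    · have hp0 : 1 ≤ p := by
        by_cases h0 : sv = 0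
        · omega
        · have hb' : bad = 0 := by rw [hbad, if_neg h0]
          omega
      have hq1 : (p - 1) + 1 < n := by omega
      have hqpar : (p - 1) % 2 = sv := by omega
      have hκ := (hblue_iff (p - 1) hq1).mpr hqpar
      have ha := hadj (p - 1) hq1
      rw [hκ] at ha
      have ha' : (SimpleGraph.fromRel
          (fun (u v : Fin n) => (3 ≤ (u : ℕ) ∧ 3 ≤ (v : ℕ) ∨ (u : ℕ) < 3 ∧ (v : ℕ) = 3))).Adj
          (v (p - 1)) (v (p - 1 + 1)) := by simpa using ha
      have hpp : p - 1 + 1 = p := by omega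
      rw [hpp] at ha'
      exact ⟨p - 1, by omega, hb _ _ ha'.symm hval, Or.inr ⟨hpar, by omega⟩⟩
  obtain ⟨p0, hp0n, hv0⟩ := hsurj ⟨0, by omega⟩
  obtain ⟨p1, hp1n, hv1⟩ := hsurj ⟨1, by omega⟩
  obtain ⟨p2, hp2n, hv2⟩ := hsurj ⟨2, by omega⟩
  have hd01 : p0 ≠ p1 := by
    intro h; rw [h, hv1] at hv0; simp [Fin.ext_iff] at hv0
  have hd02 : p0 ≠ p2 := by
    intro h; rw [h, hv2] at hv0; simp [Fin.ext_iff] at hv0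
  have hd12 : p1 ≠ p2 := by
    intro h; rw [h, hv2] at hv1; simp [Fin.ext_iff] at hv1
  have hvv0 : ((v p0 : ℕ)) < 3 := by rw [hv0]; simp
  have hvv1 : ((v p1 : ℕ)) < 3 := by rw [hv1]; simp
  have hvv2 : ((v p2 : ℕ)) < 3 := by rw [hv2]; simp
  have final : ∀ pa pb, pa < n → pb < n → pa ≠ pb → pa ≠ bad → pb ≠ bad →
      ((v pa : ℕ)) < 3 → ((v pb : ℕ)) < 3 → False := by
    intro pa pb han hbn hnepq hba hbb hva hvb
    obtain ⟨qa, hqa, hvqa, hca⟩ := key pa han hva hba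
    obtain ⟨qb, hqb, hvqb, hcb⟩ := key pb hbn hvb hbb
    have hq : qa = qb := hinj (Set.mem_Iio.mpr hqa) (Set.mem_Iio.mpr hqb)
      (hvqa.trans hvqb.symm)
    rcases hca with ⟨h1, h2⟩ | ⟨h1, h2⟩ <;> rcases hcb with ⟨h3, h4⟩ | ⟨h3, h4⟩ <;> omega
  by_cases hb0 : p0 = bad
  · exact final p1 p2 hp1n hp2n hd12 (fun h => hd01 (hb0.trans h.symm))
      (fun h => hd02 (hb0.trans h.symm)) hvv1 hvv2
  · by_cases hb1 : p1 = bad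
    · exact final p0 p2 hp0n hp2n hd02 hb0 (fun h => hd12 (hb1.trans h.symm)) hvv0 hvv2
    · exact final p0 p1 hp0n hp1n hd01 hb0 hb1 hvv0 hvv1

end Stmt16Aux

/-- For every odd `n ≥ 15`, the 2-edge-coloured multigraph on `Fin n`
(colour `0` = red, colour `1` = blue) given by: a blue complete graph on the `n - 3`
vertices `A = {3, …, n-1}`, the three extra vertices `0 = v₁`, `1 = v₂`, `2 = v₃` each
joined by a blue edge to the vertex `3 = v ∈ A`, superposed with a red complete graph on
all `n` vertices, has exactly `(n choose 2) + (n-3 choose 2) + 3` edges, satisfies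
`rd(G) = 2`, and has no proper Hamiltonian path. -/
theorem stmt16 {n : ℕ} (h15 : 15 ≤ n) (hodd : Odd n) :
    ∀ G : Fin 2 → SimpleGraph (Fin n),
      G = ![⊤, SimpleGraph.fromRel
        (fun (u v : Fin n) => (3 ≤ (u : ℕ) ∧ 3 ≤ (v : ℕ)) ∨ ((u : ℕ) < 3 ∧ (v : ℕ) = 3))] →
      numEdges G = n.choose 2 + (n - 3).choose 2 + 3 ∧
      minRainbowDeg G = 2 ∧ ¬ HasProperHamPath G := by
  intro G hG
  subst hG
  refine ⟨?_, ?_, stmt16_nopath h15 hodd⟩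
  · rw [numEdges, Fin.sum_univ_two]
    have h0 : (![⊤, SimpleGraph.fromRel (fun (u v : Fin n) =>
        (3 ≤ (u : ℕ) ∧ 3 ≤ (v : ℕ)) ∨ ((u : ℕ) < 3 ∧ (v : ℕ) = 3))] :
        Fin 2 → SimpleGraph (Fin n)) 0 = ⊤ := rfl
    have h1 : (![⊤, SimpleGraph.fromRel (fun (u v : Fin n) =>
        (3 ≤ (u : ℕ) ∧ 3 ≤ (v : ℕ)) ∨ ((u : ℕ) < 3 ∧ (v : ℕ) = 3))] :
        Fin 2 → SimpleGraph (Fin n)) 1 = SimpleGraph.fromRel (fun (u v : Fin n) =>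
        (3 ≤ (u : ℕ) ∧ 3 ≤ (v : ℕ)) ∨ ((u : ℕ) < 3 ∧ (v : ℕ) = 3)) := rfl
    rw [h0, h1, stmt16_top_ncard, stmt16_blue_ncard h15]
    omega
  · rw [minRainbowDeg]
    have hcol : ∀ x : Fin n, {i : Fin 2 | ∃ y, ((![⊤, SimpleGraph.fromRel
        (fun (u v : Fin n) => (3 ≤ (u : ℕ) ∧ 3 ≤ (v : ℕ)) ∨ ((u : ℕ) < 3 ∧ (v : ℕ) = 3))] :
        Fin 2 → SimpleGraph (Fin n)) i).Adj x y} = Set.univ := by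
      intro x
      ext i
      simp only [Set.mem_setOf_eq, Set.mem_univ, iff_true]
      fin_cases i
      · show ∃ y, (⊤ : SimpleGraph (Fin n)).Adj x y
        by_cases h : (x : ℕ) = 0
        · exact ⟨⟨1, by omega⟩, by simp [SimpleGraph.top_adj, Fin.ext_iff]; omega⟩
        · exact ⟨⟨0, by omega⟩, by simp [SimpleGraph.top_adj, Fin.ext_iff]; omega⟩
      · show ∃ y, (SimpleGraph.fromRel
          (fun (u v : Fin n) => (3 ≤ (u : ℕ) ∧ 3 ≤ (v : ℕ)) ∨ ((u : ℕ) < 3 ∧ (v : ℕ) = 3))).Adj x y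
        by_cases h : (x : ℕ) = 3
        · refine ⟨⟨0, by omega⟩, ?_⟩
          rw [SimpleGraph.fromRel_adj]
          refine ⟨by simp [Fin.ext_iff]; omega, ?_⟩
          simp only [Fin.val_mk, le_refl, true_and, and_true]
          omega
        · refine ⟨⟨3, by omega⟩, ?_⟩
          refine ⟨by simp [Fin.ext_iff]; omega, ?_⟩
          simp only [Fin.val_mk, le_refl, true_and, and_true]
          omega
    have hfun : rainbowDeg (![⊤, SimpleGraph.fromRel
        (fun (u v : Fin n) => (3 ≤ (u : ℕ) ∧ 3 ≤ (v : ℕ)) ∨ ((u : ℕ) < 3 ∧ (v : ℕ) = 3))] :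
        Fin 2 → SimpleGraph (Fin n)) = fun _ => 2 := by
      funext x
      rw [rainbowDeg, hcol x, Set.ncard_univ]
      simp
    rw [hfun]
    have hne : Nonempty (Fin n) := ⟨⟨0, by omega⟩⟩
    rw [Set.range_const]
    exact csInf_singleton 2
end
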